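/- arXiv:1401.4522 — 7 statements merged into one kernel-verified Lean document; each statement's English description precedes it below -/
import Mathlib

section
/- For every integer m ≥ 3, the super edge-magic deficiency of P_4 + K̄_m equals m − 1. -/
open SimpleGraph

/-- A super edge-magic labeling of `G` with magic constant `k`: a bijection from
vertices and edges onto `{1, …, p+q}` sending vertices onto `{1, …, p}`, with
`f x + f (xy) + f y = k` for every edge `xy`. -/
def IsSEMWith {V : Type*} [Fintype V] (G : SimpleGraph V) (k : ℕ) : Prop :=
  ∃ (f : V → ℕ) (g : G.edgeSet → ℕ),
    Function.Injective (Sum.elim f g) ∧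
    Set.range (Sum.elim f g) = Set.Icc 1 (Fintype.card V + G.edgeSet.ncard) ∧
    Set.range f = Set.Icc 1 (Fintype.card V) ∧
    ∀ (x y : V) (h : G.Adj x y), f x + g ⟨s(x, y), G.mem_edgeSet.mpr h⟩ + f y = k

/-- `G` is super edge-magic. -/
def IsSEM {V : Type*} [Fintype V] (G : SimpleGraph V) : Prop :=
  ∃ k : ℕ, IsSEMWith G k

/-- The graph `G ∪ t K₁`: `G` together with `t` added isolated vertices. -/
def unionIsolated {V : Type*} (G : SimpleGraph V) (t : ℕ) : SimpleGraph (V ⊕ Fin t) :=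
  G.map Function.Embedding.inl

/-- The super edge-magic deficiency `μₛ(G)`: the least `t` such that `G ∪ t K₁`
is super edge-magic, or `⊤` if there is no such `t`. -/
noncomputable def semDeficiency {V : Type*} [Fintype V] (G : SimpleGraph V) : ℕ∞ :=
  sInf ((fun t : ℕ => (t : ℕ∞)) '' {t : ℕ | IsSEM (unionIsolated G t)})

/-- `H n`: the wheel `W_n` (hub `0`, rim `1, …, n`) minus the spoke `{0, 1}`. -/
def wheelMinusSpoke (n : ℕ) : SimpleGraph (Fin (n + 1)) :=
  SimpleGraph.fromRel (fun i j =>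
    ((i : ℕ) = 0 ∧ 2 ≤ (j : ℕ)) ∨
    ((j : ℕ) = (i : ℕ) + 1 ∧ 1 ≤ (i : ℕ)) ∨
    ((i : ℕ) = n ∧ (j : ℕ) = 1))

/-- The join `P_n + K̄_m`: a path `u_1 … u_n` plus `m` vertices joined to every `u_i`. -/
def pathJoin (n m : ℕ) : SimpleGraph (Fin n ⊕ Fin m) :=
  SimpleGraph.fromRel (fun a b =>
    (∃ i j : Fin n, a = Sum.inl i ∧ b = Sum.inl j ∧ (j : ℕ) = (i : ℕ) + 1) ∨
    (∃ (i : Fin n) (j : Fin m), a = Sum.inl i ∧ b = Sum.inr j))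

/-- The join `K_{1,n} + K̄_m`: a star with center `Sum.inl 0` and leaves
`Sum.inl i`, `i ≠ 0`, plus `m` vertices joined to all star vertices. -/
def starJoin (n m : ℕ) : SimpleGraph (Fin (n + 1) ⊕ Fin m) :=
  SimpleGraph.fromRel (fun a b =>
    (∃ i : Fin (n + 1), a = Sum.inl 0 ∧ b = Sum.inl i ∧ i ≠ 0) ∨
    (∃ (i : Fin (n + 1)) (j : Fin m), a = Sum.inl i ∧ b = Sum.inr j))

/-- The join `C_n + K̄_m`: a cycle `u_1 … u_n` plus `m` vertices joined to every `u_i`. -/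
def cycleJoin (n m : ℕ) : SimpleGraph (Fin n ⊕ Fin m) :=
  SimpleGraph.fromRel (fun a b =>
    (∃ i j : Fin n, a = Sum.inl i ∧ b = Sum.inl j ∧
      ((j : ℕ) = (i : ℕ) + 1 ∨ ((i : ℕ) = n - 1 ∧ (j : ℕ) = 0))) ∨
    (∃ (i : Fin n) (j : Fin m), a = Sum.inl i ∧ b = Sum.inr j))

/-- The join `G + K̄_m`: `G` plus `m` new vertices joined to every vertex of `G`. -/
def joinIsolated {V : Type*} (G : SimpleGraph V) (m : ℕ) : SimpleGraph (V ⊕ Fin m) :=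
  SimpleGraph.fromRel (fun a b =>
    (∃ x y : V, a = Sum.inl x ∧ b = Sum.inl y ∧ G.Adj x y) ∨
    (∃ (x : V) (j : Fin m), a = Sum.inl x ∧ b = Sum.inr j))

namespace Stmt11
open Sum

abbrev Vt (m t : ℕ) := (Fin 4 ⊕ Fin m) ⊕ Fin t

def Fl (m : ℕ) {t : ℕ} : Vt m t → ℕ
  | .inl (.inl i) => if (i : ℕ) ≤ 1 then (i : ℕ) + 1 else 2*m + (i : ℕ)
  | .inl (.inr j) => 2*(j : ℕ) + 3
  | .inr j => 2*(j : ℕ) + 4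

def sumF (m : ℕ) {t : ℕ} : Sym2 (Vt m t) → ℕ :=
  Sym2.lift ⟨fun a b => Fl m a + Fl m b, fun a b => Nat.add_comm _ _⟩

@[simp] lemma sumF_mk (m : ℕ) {t : ℕ} (a b : Vt m t) :
    sumF m s(a, b) = Fl m a + Fl m b := rfl

def Hg (m t : ℕ) : SimpleGraph (Vt m t) := unionIsolated (pathJoin 4 m) t

def uu {m t : ℕ} (i : Fin 4) : Vt m t := .inl (.inl i)
def vv {m t : ℕ} (hm : 3 ≤ m) (x : ℕ) : Vt m t := .inl (.inr ⟨min x (m-1), by omega⟩)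

def psi (m : ℕ) (hm : 3 ≤ m) {t : ℕ} (s : ℕ) : Sym2 (Vt m t) :=
  if s = 3 then s(uu 0, uu 1)
  else if s = 2*m+4 then s(uu 1, uu 2)
  else if s = 4*m+5 then s(uu 2, uu 3)
  else if s < 2*m+4 then
    if s % 2 = 0 then s(uu 0, vv hm ((s-4)/2)) else s(uu 1, vv hm ((s-5)/2))
  else
    if s % 2 = 0 then s(uu 3, vv hm ((s-2*m-6)/2)) else s(uu 2, vv hm ((s-2*m-5)/2))

lemma hg_adj {m t : ℕ} {a b : Vt m t} :
    (Hg m t).Adj a b ↔ ∃ x y : Fin 4 ⊕ Fin m, a = .inl x ∧ b = .inl y ∧ x ≠ y ∧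
      ((∃ i j : Fin 4, x = Sum.inl i ∧ y = Sum.inl j ∧ (j : ℕ) = (i : ℕ) + 1) ∨
       (∃ (i : Fin 4) (j : Fin m), x = Sum.inl i ∧ y = Sum.inr j) ∨
       (∃ i j : Fin 4, y = Sum.inl i ∧ x = Sum.inl j ∧ (j : ℕ) = (i : ℕ) + 1) ∨
       (∃ (i : Fin 4) (j : Fin m), y = Sum.inl i ∧ x = Sum.inr j)) := by
  constructor
  · rintro ⟨-, x, y, hadj, hx, hy⟩
    rw [pathJoin, SimpleGraph.fromRel_adj] at hadj
    obtain ⟨hne, hrel⟩ := hadj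
    refine ⟨x, y, hx.symm, hy.symm, hne, ?_⟩
    rcases hrel with (h|h)|(h|h)
    · exact Or.inl h
    · exact Or.inr (Or.inl h)
    · exact Or.inr (Or.inr (Or.inl h))
    · exact Or.inr (Or.inr (Or.inr h))
  · rintro ⟨x, y, rfl, rfl, hne, hrel⟩
    refine ⟨Sum.inl_injective.ne hne, x, y, ?_, rfl, rfl⟩
    rw [pathJoin, SimpleGraph.fromRel_adj]
    refine ⟨hne, ?_⟩
    rcases hrel with h|h|h|h
    · exact Or.inl (Or.inl h)
    · exact Or.inl (Or.inr h)
    · exact Or.inr (Or.inl h)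
    · exact Or.inr (Or.inr h)

lemma uu_ne_uu {m t : ℕ} {i j : Fin 4} (h : (i:ℕ) ≠ (j:ℕ)) :
    (uu i : Vt m t) ≠ uu j := by
  simp only [uu, ne_eq, Sum.inl.injEq]
  exact fun hh => h (by rw [hh])

lemma adj_path {m t : ℕ} (i j : Fin 4) (h : (j:ℕ) = (i:ℕ) + 1) :
    (Hg m t).Adj (uu i) (uu j) := by
  rw [hg_adj]
  exact ⟨.inl i, .inl j, rfl, rfl, by simp [Sum.inl.injEq]; exact fun hh => by omega,
    Or.inl ⟨i, j, rfl, rfl, h⟩⟩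

lemma adj_join {m t : ℕ} (hm : 3 ≤ m) (i : Fin 4) (x : ℕ) :
    (Hg m t).Adj (uu i) (vv hm x) := by
  rw [hg_adj]
  exact ⟨.inl i, .inr ⟨min x (m-1), by omega⟩, rfl, rfl, by simp,
    Or.inr (Or.inl ⟨i, _, rfl, rfl⟩)⟩

lemma Fl_uu {m t : ℕ} (i : Fin 4) :
    Fl m (uu i : Vt m t) = if (i:ℕ) ≤ 1 then (i:ℕ) + 1 else 2*m + (i:ℕ) := rfl

lemma Fl_uu0 {m t : ℕ} : Fl m (uu 0 : Vt m t) = 1 := rfl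
lemma Fl_uu1 {m t : ℕ} : Fl m (uu 1 : Vt m t) = 2 := rfl
lemma Fl_uu2 {m t : ℕ} : Fl m (uu 2 : Vt m t) = 2*m + 2 := rfl
lemma Fl_uu3 {m t : ℕ} : Fl m (uu 3 : Vt m t) = 2*m + 3 := rfl

lemma Fl_vv {m t : ℕ} (hm : 3 ≤ m) (x : ℕ) (hx : x ≤ m - 1) :
    Fl m (vv hm x : Vt m t) = 2*x + 3 := by
  simp only [vv, Fl]
  omega

lemma psi_spec (m : ℕ) (hm : 3 ≤ m) (t : ℕ) {s : ℕ} (h3 : 3 ≤ s) (h5 : s ≤ 4*m+5) :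
    (psi m hm (t := t) s) ∈ (Hg m t).edgeSet ∧ sumF m (psi m hm (t := t) s) = s := by
  rw [psi]
  split_ifs with e1 e2 e3 e4 e5 e6
  · exact ⟨(adj_path 0 1 rfl), by rw [sumF_mk, Fl_uu0, Fl_uu1]; omega⟩
  · exact ⟨(adj_path 1 2 rfl), by rw [sumF_mk, Fl_uu1, Fl_uu2]; omega⟩
  · exact ⟨(adj_path 2 3 rfl), by rw [sumF_mk, Fl_uu2, Fl_uu3]; omega⟩
  · exact ⟨adj_join hm 0 _, by rw [sumF_mk, Fl_uu0, Fl_vv hm _ (by omega)]; omega⟩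
  · exact ⟨adj_join hm 1 _, by rw [sumF_mk, Fl_uu1, Fl_vv hm _ (by omega)]; omega⟩
  · exact ⟨adj_join hm 3 _, by rw [sumF_mk, Fl_uu3, Fl_vv hm _ (by omega)]; omega⟩
  · exact ⟨adj_join hm 2 _, by rw [sumF_mk, Fl_uu2, Fl_vv hm _ (by omega)]; omega⟩

lemma vv_eq {m t : ℕ} (hm : 3 ≤ m) (j : Fin m) :
    (vv hm (j:ℕ) : Vt m t) = .inl (.inr j) := by
  have : (⟨min (j:ℕ) (m-1), by omega⟩ : Fin m) = j := Fin.ext (by have := j.isLt; simp; omega)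
  simp [vv, this]

lemma vv_congr {m t : ℕ} (hm : 3 ≤ m) {a b : ℕ} (h : min a (m-1) = min b (m-1)) :
    (vv hm a : Vt m t) = vv hm b := by
  unfold vv
  exact congrArg _ (congrArg _ (Fin.ext h))

lemma edge_spec (m : ℕ) (hm : 3 ≤ m) (t : ℕ) {e : Sym2 (Vt m t)}
    (he : e ∈ (Hg m t).edgeSet) :
    3 ≤ sumF m e ∧ sumF m e ≤ 4*m+5 ∧ psi m hm (sumF m e) = e := by
  induction e with
  | _ a b =>
    rw [SimpleGraph.mem_edgeSet, hg_adj] at he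
    obtain ⟨x, y, rfl, rfl, hne, hrel⟩ := he
    have key : ∀ (i : Fin 4) (j : Fin 4), (j:ℕ) = (i:ℕ) + 1 →
        3 ≤ sumF m (s(.inl (.inl i), .inl (.inl j)) : Sym2 (Vt m t)) ∧
        sumF m (s(.inl (.inl i), .inl (.inl j)) : Sym2 (Vt m t)) ≤ 4*m+5 ∧
        psi m hm (t := t) (sumF m (s(.inl (.inl i), .inl (.inl j)) : Sym2 (Vt m t)))
          = s(.inl (.inl i), .inl (.inl j)) := by
      intro i j hij
      have h1 := i.isLt
      have h2 := j.isLt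
      rcases (by omega : (i:ℕ) = 0 ∧ (j:ℕ) = 1 ∨ (i:ℕ) = 1 ∧ (j:ℕ) = 2 ∨
          (i:ℕ) = 2 ∧ (j:ℕ) = 3) with ⟨e1,e2⟩|⟨e1,e2⟩|⟨e1,e2⟩
      · have hi : i = (0 : Fin 4) := Fin.ext (by rw [show ((0:Fin 4):ℕ) = 0 from rfl]; omega)
        have hj : j = (1 : Fin 4) := Fin.ext (by rw [show ((1:Fin 4):ℕ) = 1 from rfl]; omega)
        subst hi hj
        have hs : sumF m (s(.inl (.inl (0:Fin 4)), .inl (.inl (1:Fin 4))) : Sym2 (Vt m t))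
            = 3 := rfl
        rw [hs, psi, if_pos rfl]
        exact ⟨by omega, by omega, rfl⟩
      · have hi : i = (1 : Fin 4) := Fin.ext (by rw [show ((1:Fin 4):ℕ) = 1 from rfl]; omega)
        have hj : j = (2 : Fin 4) := Fin.ext (by rw [show ((2:Fin 4):ℕ) = 2 from rfl]; omega)
        subst hi hj
        have hs : sumF m (s(.inl (.inl (1:Fin 4)), .inl (.inl (2:Fin 4))) : Sym2 (Vt m t))
            = 2 + (2*m + 2) := rfl
        rw [hs, psi, if_neg (by omega), if_pos (by omega)]
        exact ⟨by omega, by omega, rfl⟩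
      · have hi : i = (2 : Fin 4) := Fin.ext (by rw [show ((2:Fin 4):ℕ) = 2 from rfl]; omega)
        have hj : j = (3 : Fin 4) := Fin.ext (by rw [show ((3:Fin 4):ℕ) = 3 from rfl]; omega)
        subst hi hj
        have hs : sumF m (s(.inl (.inl (2:Fin 4)), .inl (.inl (3:Fin 4))) : Sym2 (Vt m t))
            = 2*m + 2 + (2*m + 3) := rfl
        rw [hs, psi, if_neg (by omega), if_neg (by omega), if_pos (by omega)]
        exact ⟨by omega, by omega, rfl⟩
    have keyj : ∀ (i : Fin 4) (j : Fin m),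
        3 ≤ sumF m (s(.inl (.inl i), .inl (.inr j)) : Sym2 (Vt m t)) ∧
        sumF m (s(.inl (.inl i), .inl (.inr j)) : Sym2 (Vt m t)) ≤ 4*m+5 ∧
        psi m hm (t := t) (sumF m (s(.inl (.inl i), .inl (.inr j)) : Sym2 (Vt m t)))
          = s(.inl (.inl i), .inl (.inr j)) := by
      intro i j
      have h1 := i.isLt
      have h2 := j.isLt
      rw [← vv_eq hm j]
      rcases (by omega : (i:ℕ) = 0 ∨ (i:ℕ) = 1 ∨ (i:ℕ) = 2 ∨ (i:ℕ) = 3)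
        with e1|e1|e1|e1
      · have hi : i = (0 : Fin 4) := Fin.ext (by rw [show ((0:Fin 4):ℕ) = 0 from rfl]; omega)
        subst hi
        have hs : sumF m (s(.inl (.inl (0:Fin 4)), vv hm (j:ℕ)) : Sym2 (Vt m t))
            = 1 + (2 * min (j:ℕ) (m-1) + 3) := rfl
        rw [hs, psi, if_neg (by omega), if_neg (by omega), if_neg (by omega),
          if_pos (by omega), if_pos (by omega)]
        refine ⟨by omega, by omega, ?_⟩
        rw [vv_congr hm (show min ((1 + (2 * min (j:ℕ) (m-1) + 3) - 4)/2) (m-1)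
          = min (j:ℕ) (m-1) by omega)]
        rfl
      · have hi : i = (1 : Fin 4) := Fin.ext (by rw [show ((1:Fin 4):ℕ) = 1 from rfl]; omega)
        subst hi
        have hs : sumF m (s(.inl (.inl (1:Fin 4)), vv hm (j:ℕ)) : Sym2 (Vt m t))
            = 2 + (2 * min (j:ℕ) (m-1) + 3) := rfl
        rw [hs, psi, if_neg (by omega), if_neg (by omega), if_neg (by omega),
          if_pos (by omega), if_neg (by omega)]
        refine ⟨by omega, by omega, ?_⟩
        rw [vv_congr hm (show min ((2 + (2 * min (j:ℕ) (m-1) + 3) - 5)/2) (m-1)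
          = min (j:ℕ) (m-1) by omega)]
        rfl
      · have hi : i = (2 : Fin 4) := Fin.ext (by rw [show ((2:Fin 4):ℕ) = 2 from rfl]; omega)
        subst hi
        have hs : sumF m (s(.inl (.inl (2:Fin 4)), vv hm (j:ℕ)) : Sym2 (Vt m t))
            = 2*m + 2 + (2 * min (j:ℕ) (m-1) + 3) := rfl
        rw [hs, psi, if_neg (by omega), if_neg (by omega), if_neg (by omega),
          if_neg (by omega), if_neg (by omega)]
        refine ⟨by omega, by omega, ?_⟩
        rw [vv_congr hm (show min ((2*m + 2 + (2 * min (j:ℕ) (m-1) + 3) - 2*m - 5)/2) (m-1)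
          = min (j:ℕ) (m-1) by omega)]
        rfl
      · have hi : i = (3 : Fin 4) := Fin.ext (by rw [show ((3:Fin 4):ℕ) = 3 from rfl]; omega)
        subst hi
        have hs : sumF m (s(.inl (.inl (3:Fin 4)), vv hm (j:ℕ)) : Sym2 (Vt m t))
            = 2*m + 3 + (2 * min (j:ℕ) (m-1) + 3) := rfl
        rw [hs, psi, if_neg (by omega), if_neg (by omega), if_neg (by omega),
          if_neg (by omega), if_pos (by omega)]
        refine ⟨by omega, by omega, ?_⟩
        rw [vv_congr hm (show min ((2*m + 3 + (2 * min (j:ℕ) (m-1) + 3) - 2*m - 6)/2) (m-1)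
          = min (j:ℕ) (m-1) by omega)]
        rfl
    rcases hrel with ⟨i, j, rfl, rfl, hij⟩ | ⟨i, j, rfl, rfl⟩ | ⟨i, j, rfl, rfl, hij⟩
      | ⟨i, j, rfl, rfl⟩
    · exact key i j hij
    · exact keyj i j
    · rw [Sym2.eq_swap]
      exact key i j hij
    · rw [Sym2.eq_swap]
      exact keyj i j

lemma card_edge (m t : ℕ) (hm : 3 ≤ m) : (Hg m t).edgeSet.ncard = 4*m+3 := by
  have himg : sumF m '' (Hg m t).edgeSet = Set.Icc 3 (4*m+5) := by
    apply Set.eq_of_subset_of_subset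
    · rintro _ ⟨e, he, rfl⟩
      obtain ⟨h1, h2, -⟩ := edge_spec m hm t he
      exact ⟨h1, h2⟩
    · rintro s ⟨h3, h5⟩
      obtain ⟨hmem, hval⟩ := psi_spec m hm t h3 h5
      exact ⟨_, hmem, hval⟩
  have hinj : Set.InjOn (sumF m) (Hg m t).edgeSet := by
    intro e1 h1 e2 h2 h
    rw [← (edge_spec m hm t h1).2.2, ← (edge_spec m hm t h2).2.2, h]
  calc (Hg m t).edgeSet.ncard = (sumF m '' (Hg m t).edgeSet).ncard :=
        (Set.ncard_image_of_injOn hinj).symm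
    _ = (Set.Icc 3 (4*m+5)).ncard := by rw [himg]
    _ = 4*m+3 := by
        rw [← Finset.coe_Icc, Set.ncard_coe_finset, Nat.card_Icc]
        omega

lemma Fl_le (m t : ℕ) (hm : 3 ≤ m) (ht : t ≤ m - 1) (v : Vt m t) : Fl m v ≤ 2*m+3 := by
  rcases v with (i | j) | j
  · have := i.isLt; simp only [Fl]; split_ifs <;> omega
  · have := j.isLt; simp only [Fl]; omega
  · have := j.isLt; simp only [Fl]; omega

lemma Fl_inj (m : ℕ) (hm : 3 ≤ m) : Function.Injective (Fl m (t := m-1)) := by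
  intro a b h
  rcases a with (i | j) | j <;> rcases b with (i' | j') | j' <;> simp only [Fl] at h
  · have := i.isLt; have := i'.isLt
    split_ifs at h <;> exact congrArg _ (congrArg _ (Fin.ext (by omega)))
  · have := i.isLt; have := j'.isLt
    exfalso; split_ifs at h <;> omega
  · have := i.isLt; have := j'.isLt
    exfalso; split_ifs at h <;> omega
  · have := j.isLt; have := i'.isLt
    exfalso; split_ifs at h <;> omega
  · exact congrArg _ (congrArg _ (Fin.ext (by omega)))
  · exfalso; omega
  · have := j.isLt; have := i'.isLt
    exfalso; split_ifs at h <;> omega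
  · exfalso; omega
  · exact congrArg _ (Fin.ext (by omega))

lemma Fl_range (m : ℕ) (hm : 3 ≤ m) :
    Set.range (Fl m (t := m-1)) = Set.Icc 1 (2*m+3) := by
  apply Set.eq_of_subset_of_subset
  · rintro _ ⟨v, rfl⟩
    rw [Set.mem_Icc]
    rcases v with (i | j) | j
    · have := i.isLt; simp only [Fl]; split_ifs <;> omega
    · have := j.isLt; simp only [Fl]; omega
    · have := j.isLt; simp only [Fl]; omega
  · rintro n hn
    rw [Set.mem_Icc] at hn
    obtain ⟨hn1, hn2⟩ := hn
    rcases (by omega : n = 1 ∨ n = 2 ∨ n = 2*m+2 ∨ n = 2*m+3 ∨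
        (n % 2 = 1 ∧ 3 ≤ n ∧ n ≤ 2*m+1) ∨ (n % 2 = 0 ∧ 4 ≤ n ∧ n ≤ 2*m))
      with e|e|e|e|⟨e1,e2,e3⟩|⟨e1,e2,e3⟩
    · exact ⟨.inl (.inl 0), by
        rw [show Fl m (.inl (.inl (0:Fin 4)) : Vt m (m-1)) = 1 from rfl]; omega⟩
    · exact ⟨.inl (.inl 1), by
        rw [show Fl m (.inl (.inl (1:Fin 4)) : Vt m (m-1)) = 2 from rfl]; omega⟩
    · exact ⟨.inl (.inl 2), by
        rw [show Fl m (.inl (.inl (2:Fin 4)) : Vt m (m-1)) = 2*m+2 from rfl]; omega⟩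
    · exact ⟨.inl (.inl 3), by
        rw [show Fl m (.inl (.inl (3:Fin 4)) : Vt m (m-1)) = 2*m+3 from rfl]; omega⟩
    · exact ⟨.inl (.inr ⟨(n-3)/2, by omega⟩), by
        rw [show Fl m (.inl (.inr ⟨(n-3)/2, by omega⟩) : Vt m (m-1))
          = 2*((n-3)/2)+3 from rfl]; omega⟩
    · exact ⟨.inr ⟨(n-4)/2, by omega⟩, by
        rw [show Fl m (.inr ⟨(n-4)/2, by omega⟩ : Vt m (m-1))
          = 2*((n-4)/2)+4 from rfl]; omega⟩

lemma upper (m : ℕ) (hm : 3 ≤ m) : IsSEM (Hg m (m-1)) := by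
  have hc : Fintype.card (Vt m (m-1)) = 2*m+3 := by
    have : Fintype.card (Vt m (m-1)) = 4 + m + (m-1) := by simp
    omega
  have hq := card_edge m (m-1) hm
  set g : (Hg m (m-1)).edgeSet → ℕ := fun e => 6*m+9 - sumF m e.1 with hg
  have hgmem : ∀ e : (Hg m (m-1)).edgeSet, 2*m+4 ≤ g e ∧ g e ≤ 6*m+6 := by
    intro e
    obtain ⟨h1, h2, -⟩ := edge_spec m hm (m-1) e.2
    constructor <;> simp only [hg] <;> omega
  refine ⟨6*m+9, Fl m, g, ?_, ?_, ?_, ?_⟩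
  · intro a b h
    rcases a with a | e <;> rcases b with b | e'
    · exact congrArg _ (Fl_inj m hm h)
    · exfalso
      have h1 := Fl_le m (m-1) hm le_rfl a
      have h2 := (hgmem e').1
      simp only [Sum.elim_inl, Sum.elim_inr] at h
      omega
    · exfalso
      have h1 := Fl_le m (m-1) hm le_rfl b
      have h2 := (hgmem e).1
      simp only [Sum.elim_inl, Sum.elim_inr] at h
      omega
    · simp only [Sum.elim_inr] at h
      obtain ⟨a1, a2, a3⟩ := edge_spec m hm (m-1) e.2
      obtain ⟨b1, b2, b3⟩ := edge_spec m hm (m-1) e'.2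
      have hsum : sumF m e.1 = sumF m e'.1 := by simp only [hg] at h; omega
      exact congrArg _ (Subtype.ext (by rw [← a3, ← b3, hsum]))
  · rw [Set.Sum.elim_range, Fl_range m hm, hc, hq]
    have hrg : Set.range g = Set.Icc (2*m+4) (6*m+6) := by
      apply Set.eq_of_subset_of_subset
      · rintro _ ⟨e, rfl⟩
        rw [Set.mem_Icc]
        exact hgmem e
      · rintro v hv
        rw [Set.mem_Icc] at hv
        obtain ⟨hmem, hval⟩ := psi_spec m hm (m-1)
          (s := 6*m+9-v) (by omega) (by omega)
        exact ⟨⟨_, hmem⟩, by simp only [hg]; rw [hval]; omega⟩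
    rw [hrg]
    ext n
    simp only [Set.mem_union, Set.mem_Icc]
    omega
  · rw [Fl_range m hm, hc]
  · intro x y h
    have h1 := Fl_le m (m-1) hm le_rfl x
    have h2 := Fl_le m (m-1) hm le_rfl y
    simp only [hg, sumF_mk]
    omega

lemma lower (m t : ℕ) (hm : 3 ≤ m) (h : IsSEM (Hg m t)) : m - 1 ≤ t := by
  obtain ⟨k, f, g, hinj, hrange, hrangef, hmagic⟩ := h
  have hp : Fintype.card (Vt m t) = m + t + 4 := by
    have : Fintype.card (Vt m t) = 4 + m + t := by simp
    omega
  have hq := card_edge m t hm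
  have hfinj : Function.Injective f := fun a b hab =>
    Sum.inl.inj (hinj (show Sum.elim f g (Sum.inl a) = Sum.elim f g (Sum.inl b) from hab))
  have hginj : Function.Injective g := fun a b hab =>
    Sum.inr.inj (hinj (show Sum.elim f g (Sum.inr a) = Sum.elim f g (Sum.inr b) from hab))
  have key : ∀ e : (Hg m t).edgeSet,
      g e + 3 ≤ k ∧ k ≤ g e + (2*(m+t+4) - 1) := by
    rintro ⟨e, he⟩
    revert he
    induction e with
    | _ x y =>
      intro he
      have hadj : (Hg m t).Adj x y := (Hg m t).mem_edgeSet.mp he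
      have hmg := hmagic x y hadj
      have hfx : f x ∈ Set.Icc 1 (Fintype.card (Vt m t)) :=
        hrangef ▸ Set.mem_range_self x
      have hfy : f y ∈ Set.Icc 1 (Fintype.card (Vt m t)) :=
        hrangef ▸ Set.mem_range_self y
      rw [Set.mem_Icc, hp] at hfx hfy
      have hne : f x ≠ f y := fun hh => hadj.ne (hfinj hh)
      have : g ⟨s(x,y), (Hg m t).mem_edgeSet.mpr hadj⟩ = g ⟨s(x,y), he⟩ := rfl
      rw [this] at hmg
      omega
  have hfin : Finite (Set.Icc 3 (2*(m+t+4) - 1) : Set ℕ) :=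
    (Set.finite_Icc _ _).to_subtype
  have hle : Nat.card (Hg m t).edgeSet
      ≤ Nat.card (Set.Icc 3 (2*(m+t+4) - 1) : Set ℕ) := by
    apply Nat.card_le_card_of_injective
      (f := fun e => (⟨k - g e, by
        obtain ⟨h1, h2⟩ := key e
        rw [Set.mem_Icc]
        omega⟩ : (Set.Icc 3 (2*(m+t+4) - 1) : Set ℕ)))
    intro e1 e2 h12
    have h12' : k - g e1 = k - g e2 := congrArg Subtype.val h12
    obtain ⟨a1, a2⟩ := key e1
    obtain ⟨b1, b2⟩ := key e2
    exact hginj (by omega)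
  rw [Nat.card_coe_set_eq, Nat.card_coe_set_eq, hq,
    ← Finset.coe_Icc, Set.ncard_coe_finset, Nat.card_Icc] at hle
  omega

end Stmt11


/-- for every `m ≥ 3`, `μₛ(P₄ + K̄_m) = m − 1`. -/
theorem stmt11 (m : ℕ) (hm : 3 ≤ m) :
    semDeficiency (pathJoin 4 m) = ((m - 1 : ℕ) : ℕ∞) := by
  have hup : IsSEM (unionIsolated (pathJoin 4 m) (m-1)) := Stmt11.upper m hm
  apply le_antisymm
  · exact sInf_le ⟨m-1, hup, rfl⟩
  · apply le_sInf
    rintro b ⟨t, ht, rfl⟩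
    show ((m - 1 : ℕ) : ℕ∞) ≤ (t : ℕ∞)
    exact_mod_cast Stmt11.lower m t hm ht
end

section
/- For every integer m ≥ 3, the super edge-magic deficiency of P_6 + K̄_m equals 2(m − 1). -/
open SimpleGraph

open Sum

section Aux
variable {m t : ℕ}

lemma pj_adjP (mm : ℕ) (i j : Fin 6) (h : (j:ℕ) = (i:ℕ)+1) :
    (pathJoin 6 mm).Adj (inl i) (inl j) := by
  rw [pathJoin, SimpleGraph.fromRel_adj]
  refine ⟨?_, Or.inl (Or.inl ⟨i, j, rfl, rfl, h⟩)⟩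
  intro hc
  injection hc with hc
  rw [hc] at h; omega

lemma pj_adjJ (mm : ℕ) (i : Fin 6) (j : Fin mm) :
    (pathJoin 6 mm).Adj (inl i) (inr j) := by
  rw [pathJoin, SimpleGraph.fromRel_adj]
  exact ⟨by simp, Or.inl (Or.inr ⟨i, j, rfl, rfl⟩)⟩

lemma pj_edge_cases {e : Sym2 (Fin 6 ⊕ Fin m)} (he : e ∈ (pathJoin 6 m).edgeSet) :
    (∃ i j : Fin 6, e = s(inl i, inl j) ∧ (j:ℕ) = (i:ℕ)+1) ∨
    (∃ (i : Fin 6) (j : Fin m), e = s(inl i, inr j)) := by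
  induction e using Sym2.ind with
  | _ x y =>
    rw [SimpleGraph.mem_edgeSet, pathJoin, SimpleGraph.fromRel_adj] at he
    obtain ⟨-, h | h⟩ := he
    · rcases h with ⟨i, j, rfl, rfl, hij⟩ | ⟨i, j, rfl, rfl⟩
      · exact Or.inl ⟨i, j, rfl, hij⟩
      · exact Or.inr ⟨i, j, rfl⟩
    · rcases h with ⟨i, j, rfl, rfl, hij⟩ | ⟨i, j, rfl, rfl⟩
      · exact Or.inl ⟨i, j, Sym2.eq_swap, hij⟩
      · exact Or.inr ⟨i, j, Sym2.eq_swap⟩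

/-- enumeration of the edges of `pathJoin 6 m` -/
def pjEnum (m : ℕ) : Fin 5 ⊕ Fin 6 × Fin m → (pathJoin 6 m).edgeSet
  | inl i => ⟨s(inl i.castSucc, inl i.succ),
      (pathJoin 6 m).mem_edgeSet.mpr (pj_adjP m _ _ (by simp))⟩
  | inr (i, j) => ⟨s(inl i, inr j), (pathJoin 6 m).mem_edgeSet.mpr (pj_adjJ m i j)⟩

lemma pjEnum_bij : Function.Bijective (pjEnum m) := by
  constructor
  · rintro (a | ⟨i, j⟩) (b | ⟨i', j'⟩) h <;>
      simp only [pjEnum, Subtype.mk.injEq, Sym2.eq_iff, inl.injEq, inr.injEq,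
        reduceCtorEq, and_false, false_and, or_self, false_or, or_false] at h
    · rcases h with ⟨h1, h2⟩ | ⟨h1, h2⟩
      · congr 1
        exact Fin.castSucc_injective _ h1
      · have := congrArg Fin.val h1
        have := congrArg Fin.val h2
        simp at *; omega
    · simp_all
  · rintro ⟨e, he⟩
    rcases pj_edge_cases he with ⟨i, j, rfl, hij⟩ | ⟨i, j, rfl⟩
    · have hi5 : (i : ℕ) < 5 := by have := j.isLt; omega
      refine ⟨inl ⟨i, hi5⟩, Subtype.ext ?_⟩
      have h1 : ((⟨(i:ℕ), hi5⟩ : Fin 5)).castSucc = i := by apply Fin.ext; simp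
      have h2 : ((⟨(i:ℕ), hi5⟩ : Fin 5)).succ = j := by apply Fin.ext; simp [hij]
      simp [pjEnum, h1, h2]
    · exact ⟨inr (i, j), rfl⟩

lemma pj_edge_count : (pathJoin 6 m).edgeSet.ncard = 6 * m + 5 := by
  rw [← Nat.card_coe_set_eq, ← Nat.card_eq_of_bijective _ (pjEnum_bij (m := m))]
  simp [Nat.card_eq_fintype_card]
  ring

lemma ui_edgeSet {V W : Type*} (G : SimpleGraph V) (f : V ↪ W) :
    (G.map f).edgeSet = Sym2.map f '' G.edgeSet := by
  ext e
  induction e using Sym2.ind with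
  | _ x y =>
    simp only [SimpleGraph.mem_edgeSet, SimpleGraph.map_adj, Set.mem_image]
    constructor
    · rintro ⟨u, v, huv, rfl, rfl⟩
      exact ⟨s(u, v), huv, rfl⟩
    · rintro ⟨e', he', hmap⟩
      induction e' using Sym2.ind with
      | _ u v =>
        rw [Sym2.map_pair_eq, Sym2.eq_iff] at hmap
        rcases hmap with ⟨rfl, rfl⟩ | ⟨rfl, rfl⟩
        · exact ⟨u, v, he', rfl, rfl⟩
        · exact ⟨v, u, (SimpleGraph.mem_edgeSet _).mp he'.symm, rfl, rfl⟩

lemma ui_edge_count : (unionIsolated (pathJoin 6 m) t).edgeSet.ncard = 6 * m + 5 := by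
  rw [unionIsolated, ui_edgeSet, Set.ncard_image_of_injective _ (Sym2.map.injective (fun a b => by simp)),
    pj_edge_count]

lemma ui_edge_cases {e : Sym2 ((Fin 6 ⊕ Fin m) ⊕ Fin t)}
    (he : e ∈ (unionIsolated (pathJoin 6 m) t).edgeSet) :
    (∃ i j : Fin 6, e = s(inl (inl i), inl (inl j)) ∧ (j:ℕ) = (i:ℕ)+1) ∨
    (∃ (i : Fin 6) (j : Fin m), e = s(inl (inl i), inl (inr j))) := by
  rw [unionIsolated, ui_edgeSet] at he
  obtain ⟨e', he', rfl⟩ := he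
  rcases pj_edge_cases he' with ⟨i, j, rfl, hij⟩ | ⟨i, j, rfl⟩
  · exact Or.inl ⟨i, j, by simp [Sym2.map_pair_eq], hij⟩
  · exact Or.inr ⟨i, j, by simp [Sym2.map_pair_eq]⟩

lemma ui_adjP (i j : Fin 6) (h : (j:ℕ) = (i:ℕ)+1) :
    (unionIsolated (pathJoin 6 m) t).Adj (inl (inl i)) (inl (inl j)) := by
  rw [unionIsolated, SimpleGraph.map_adj]
  exact ⟨inl i, inl j, pj_adjP m i j h, rfl, rfl⟩

lemma ui_adjJ (i : Fin 6) (j : Fin m) :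
    (unionIsolated (pathJoin 6 m) t).Adj (inl (inl i)) (inl (inr j)) := by
  rw [unionIsolated, SimpleGraph.map_adj]
  exact ⟨inl i, inr j, pj_adjJ m i j, rfl, rfl⟩

end Aux

def fl (m : ℕ) : (Fin 6 ⊕ Fin m) ⊕ Fin (2*(m-1)) → ℕ
  | inl (inl i) =>
      if (i:ℕ) = 0 then 2 else if (i:ℕ) = 1 then 1 else if (i:ℕ) = 2 then 3
      else if (i:ℕ) = 3 then 3*m+2 else if (i:ℕ) = 4 then 3*m+4 else 3*m+3
  | inl (inr j) => 3*(j:ℕ) + 4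
  | inr s => 3*((s:ℕ)/2) + 5 + (s:ℕ) % 2

lemma fl_U (m : ℕ) (i : Fin 6) :
    ((i:ℕ) = 0 ∧ fl m (inl (inl i)) = 2) ∨ ((i:ℕ) = 1 ∧ fl m (inl (inl i)) = 1) ∨
    ((i:ℕ) = 2 ∧ fl m (inl (inl i)) = 3) ∨ ((i:ℕ) = 3 ∧ fl m (inl (inl i)) = 3*m+2) ∨
    ((i:ℕ) = 4 ∧ fl m (inl (inl i)) = 3*m+4) ∨ ((i:ℕ) = 5 ∧ fl m (inl (inl i)) = 3*m+3) := by
  fin_cases i <;> simp [fl]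

lemma fl_v (m : ℕ) (j : Fin m) : fl m (inl (inr j)) = 3*(j:ℕ) + 4 := rfl
lemma fl_iso (m : ℕ) (s : Fin (2*(m-1))) : fl m (inr s) = 3*((s:ℕ)/2) + 5 + (s:ℕ) % 2 := rfl

lemma fl_bounds (m : ℕ) (hm : 3 ≤ m) (v : (Fin 6 ⊕ Fin m) ⊕ Fin (2*(m-1))) :
    1 ≤ fl m v ∧ fl m v ≤ 3*m+4 := by
  rcases v with (i | j) | s
  · have := fl_U m i; omega
  · have := j.isLt; rw [fl_v]; omega
  · have := s.isLt; rw [fl_iso]; omega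

lemma fl_inj (m : ℕ) (hm : 3 ≤ m) : Function.Injective (fl m) := by
  rintro ((i | j) | s) ((i' | j') | s') h
  · have h1 := fl_U m i; have h2 := fl_U m i'
    have : (i:ℕ) = (i':ℕ) := by omega
    simp [Fin.ext_iff, this]
  · have h1 := fl_U m i; have h2 := j'.isLt; rw [fl_v] at h; omega
  · have h1 := fl_U m i; have h2 := s'.isLt; rw [fl_iso] at h; omega
  · have h1 := fl_U m i'; have h2 := j.isLt; rw [fl_v] at h; omega
  · rw [fl_v, fl_v] at h; have : (j:ℕ) = (j':ℕ) := by omega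
    simp [Fin.ext_iff, this]
  · rw [fl_v, fl_iso] at h; have := s'.isLt; omega
  · have h1 := fl_U m i'; have h2 := s.isLt; rw [fl_iso] at h; omega
  · rw [fl_iso, fl_v] at h; have := s.isLt; omega
  · rw [fl_iso, fl_iso] at h
    have h1 := s.isLt; have h2 := s'.isLt
    have : (s:ℕ) = (s':ℕ) := by omega
    simp [Fin.ext_iff, this]

lemma fl_range (m : ℕ) (hm : 3 ≤ m) : Set.range (fl m) = Set.Icc 1 (3*m+4) := by
  ext n
  simp only [Set.mem_range, Set.mem_Icc]
  constructor
  · rintro ⟨v, rfl⟩; exact fl_bounds m hm v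
  · rintro ⟨h1, h2⟩
    by_cases e1 : n = 1
    · exact ⟨inl (inl ⟨1, by omega⟩), by simp [fl, e1]⟩
    by_cases e2 : n = 2
    · exact ⟨inl (inl ⟨0, by omega⟩), by simp [fl, e2]⟩
    by_cases e3 : n = 3
    · exact ⟨inl (inl ⟨2, by omega⟩), by simp [fl, e3]⟩
    by_cases e4 : n = 3*m+2
    · exact ⟨inl (inl ⟨3, by omega⟩), by simp [fl, e4]⟩
    by_cases e5 : n = 3*m+3
    · exact ⟨inl (inl ⟨5, by omega⟩), by simp [fl, e5]⟩
    by_cases e6 : n = 3*m+4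
    · exact ⟨inl (inl ⟨4, by omega⟩), by simp [fl, e6]⟩
    -- now 4 ≤ n ≤ 3m+1
    have hmod : n % 3 = 0 ∨ n % 3 = 1 ∨ n % 3 = 2 := by omega
    rcases hmod with h3 | h3 | h3
    · -- n % 3 = 0 : n = 3a+6, iso label with s = 2a+1
      refine ⟨inr ⟨2*((n-6)/3)+1, by omega⟩, ?_⟩
      rw [fl_iso]; simp only; omega
    · -- n % 3 = 1 : n = 3j+4
      refine ⟨inl (inr ⟨(n-4)/3, by omega⟩), ?_⟩
      rw [fl_v]; simp only; omega
    · -- n % 3 = 2 : n = 3a+5, iso with s = 2a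
      refine ⟨inr ⟨2*((n-5)/3), by omega⟩, ?_⟩
      rw [fl_iso]; simp only; omega

def sumE (m : ℕ) : Sym2 ((Fin 6 ⊕ Fin m) ⊕ Fin (2*(m-1))) → ℕ :=
  Sym2.lift ⟨fun a b => fl m a + fl m b, fun a b => by ring⟩

lemma sumE_mk (m : ℕ) (a b : (Fin 6 ⊕ Fin m) ⊕ Fin (2*(m-1))) :
    sumE m s(a, b) = fl m a + fl m b := rfl

lemma sumE_inj (m : ℕ) (hm : 3 ≤ m) {e e' : Sym2 ((Fin 6 ⊕ Fin m) ⊕ Fin (2*(m-1)))}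
    (he : e ∈ (unionIsolated (pathJoin 6 m) (2*(m-1))).edgeSet)
    (he' : e' ∈ (unionIsolated (pathJoin 6 m) (2*(m-1))).edgeSet)
    (h : sumE m e = sumE m e') : e = e' := by
  rcases ui_edge_cases he with ⟨i, j, rfl, hij⟩ | ⟨i, j, rfl⟩ <;>
    rcases ui_edge_cases he' with ⟨i', j', rfl, hij'⟩ | ⟨i', j', rfl⟩ <;>
    rw [sumE_mk, sumE_mk] at h
  · have u1 := fl_U m i; have u2 := fl_U m j; have u3 := fl_U m i'; have u4 := fl_U m j'
    have : (i:ℕ) = (i':ℕ) ∧ (j:ℕ) = (j':ℕ) := by omega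
    have hi : i = i' := Fin.ext this.1
    have hj : j = j' := Fin.ext this.2
    rw [hi, hj]
  · have u1 := fl_U m i; have u2 := fl_U m j; have u3 := fl_U m i'
    have hb := j'.isLt; rw [fl_v] at h; omega
  · have u1 := fl_U m i'; have u2 := fl_U m j'; have u3 := fl_U m i
    have hb := j.isLt; rw [fl_v] at h; omega
  · have u1 := fl_U m i; have u2 := fl_U m i'
    have hb := j.isLt; have hb' := j'.isLt
    rw [fl_v, fl_v] at h
    have : (i:ℕ) = (i':ℕ) ∧ (j:ℕ) = (j':ℕ) := by omega
    have hi : i = i' := Fin.ext this.1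
    have hj : j = j' := Fin.ext this.2
    rw [hi, hj]

lemma sumE_bounds (m : ℕ) (hm : 3 ≤ m) {e : Sym2 ((Fin 6 ⊕ Fin m) ⊕ Fin (2*(m-1)))}
    (he : e ∈ (unionIsolated (pathJoin 6 m) (2*(m-1))).edgeSet) :
    3 ≤ sumE m e ∧ sumE m e ≤ 6*m+7 := by
  rcases ui_edge_cases he with ⟨i, j, rfl, hij⟩ | ⟨i, j, rfl⟩ <;> rw [sumE_mk]
  · have u1 := fl_U m i; have u2 := fl_U m j; omega
  · have u1 := fl_U m i; have hb := j.isLt; rw [fl_v]; omega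

lemma sumE_surj (m : ℕ) (hm : 3 ≤ m) (n : ℕ) (h3 : 3 ≤ n) (h7 : n ≤ 6*m+7) :
    ∃ e ∈ (unionIsolated (pathJoin 6 m) (2*(m-1))).edgeSet, sumE m e = n := by
  by_cases e1 : n = 3
  · exact ⟨s(inl (inl ⟨0, by omega⟩), inl (inl ⟨1, by omega⟩)),
      (SimpleGraph.mem_edgeSet _).mpr (ui_adjP _ _ (by simp)), by rw [sumE_mk]; simp [fl, e1]⟩
  by_cases e2 : n = 4
  · exact ⟨s(inl (inl ⟨1, by omega⟩), inl (inl ⟨2, by omega⟩)),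
      (SimpleGraph.mem_edgeSet _).mpr (ui_adjP _ _ (by simp)), by rw [sumE_mk]; simp [fl, e2]⟩
  by_cases e3 : n = 3*m+5
  · exact ⟨s(inl (inl ⟨2, by omega⟩), inl (inl ⟨3, by omega⟩)),
      (SimpleGraph.mem_edgeSet _).mpr (ui_adjP _ _ (by simp)), by rw [sumE_mk]; simp [fl, e3]; omega⟩
  by_cases e4 : n = 6*m+6
  · exact ⟨s(inl (inl ⟨3, by omega⟩), inl (inl ⟨4, by omega⟩)),
      (SimpleGraph.mem_edgeSet _).mpr (ui_adjP _ _ (by simp)), by rw [sumE_mk]; simp [fl, e4]; omega⟩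
  by_cases e5 : n = 6*m+7
  · exact ⟨s(inl (inl ⟨4, by omega⟩), inl (inl ⟨5, by omega⟩)),
      (SimpleGraph.mem_edgeSet _).mpr (ui_adjP _ _ (by simp)), by rw [sumE_mk]; simp [fl, e5]; omega⟩
  have hmod : n % 3 = 0 ∨ n % 3 = 1 ∨ n % 3 = 2 := by omega
  by_cases hsm : n ≤ 3*m+4
  · -- small side : 5 ≤ n ≤ 3m+4, use u with labels 2, 1, 3
    rcases hmod with hr | hr | hr
    · exact ⟨s(inl (inl ⟨0, by omega⟩), inl (inr ⟨(n-6)/3, by omega⟩)),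
        (SimpleGraph.mem_edgeSet _).mpr (ui_adjJ _ _), by rw [sumE_mk, fl_v]; simp [fl]; omega⟩
    · exact ⟨s(inl (inl ⟨2, by omega⟩), inl (inr ⟨(n-7)/3, by omega⟩)),
        (SimpleGraph.mem_edgeSet _).mpr (ui_adjJ _ _), by rw [sumE_mk, fl_v]; simp [fl]; omega⟩
    · exact ⟨s(inl (inl ⟨1, by omega⟩), inl (inr ⟨(n-5)/3, by omega⟩)),
        (SimpleGraph.mem_edgeSet _).mpr (ui_adjJ _ _), by rw [sumE_mk, fl_v]; simp [fl]; omega⟩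
  · -- large side : 3m+6 ≤ n ≤ 6m+5, use u with labels 3m+2, 3m+3, 3m+4
    rcases hmod with hr | hr | hr
    · exact ⟨s(inl (inl ⟨3, by omega⟩), inl (inr ⟨(n-(3*m+6))/3, by omega⟩)),
        (SimpleGraph.mem_edgeSet _).mpr (ui_adjJ _ _), by rw [sumE_mk, fl_v]; simp [fl]; omega⟩
    · exact ⟨s(inl (inl ⟨5, by omega⟩), inl (inr ⟨(n-(3*m+7))/3, by omega⟩)),
        (SimpleGraph.mem_edgeSet _).mpr (ui_adjJ _ _), by rw [sumE_mk, fl_v]; simp [fl]; omega⟩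
    · exact ⟨s(inl (inl ⟨4, by omega⟩), inl (inr ⟨(n-(3*m+8))/3, by omega⟩)),
        (SimpleGraph.mem_edgeSet _).mpr (ui_adjJ _ _), by rw [sumE_mk, fl_v]; simp [fl]; omega⟩

section Main
variable {m : ℕ}

noncomputable def gl (m : ℕ) : (unionIsolated (pathJoin 6 m) (2*(m-1))).edgeSet → ℕ :=
  fun e => 9*m+12 - sumE m e

lemma gl_bounds (hm : 3 ≤ m) (e : (unionIsolated (pathJoin 6 m) (2*(m-1))).edgeSet) :
    3*m+5 ≤ gl m e ∧ gl m e ≤ 9*m+9 := by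
  have := sumE_bounds m hm e.2
  unfold gl; omega

lemma gl_inj (hm : 3 ≤ m) : Function.Injective (gl m) := by
  intro e e' h
  have h1 := sumE_bounds m hm e.2
  have h2 := sumE_bounds m hm e'.2
  have : sumE m e.1 = sumE m e'.1 := by unfold gl at h; omega
  exact Subtype.ext (sumE_inj m hm e.2 e'.2 this)

lemma gl_range (hm : 3 ≤ m) : Set.range (gl m) = Set.Icc (3*m+5) (9*m+9) := by
  ext n
  simp only [Set.mem_range, Set.mem_Icc]
  constructor
  · rintro ⟨e, rfl⟩; exact gl_bounds hm e
  · rintro ⟨h1, h2⟩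
    obtain ⟨e, he, hs⟩ := sumE_surj m hm (9*m+12 - n) (by omega) (by omega)
    exact ⟨⟨e, he⟩, by show 9*m+12 - sumE m e = n; omega⟩

lemma card_V (m t : ℕ) : Fintype.card ((Fin 6 ⊕ Fin m) ⊕ Fin t) = 6 + m + t := by
  simp

lemma upper (hm : 3 ≤ m) : IsSEM (unionIsolated (pathJoin 6 m) (2*(m-1))) := by
  refine ⟨9*m+12, fl m, gl m, ?_, ?_, ?_, ?_⟩
  · rintro (v | e) (v' | e') h
    · exact congrArg _ (fl_inj m hm h)
    · have := fl_bounds m hm v; have := gl_bounds hm e'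
      simp only [Sum.elim_inl, Sum.elim_inr] at h; omega
    · have := fl_bounds m hm v'; have := gl_bounds hm e
      simp only [Sum.elim_inl, Sum.elim_inr] at h; omega
    · exact congrArg _ (gl_inj hm h)
  · rw [Set.Sum.elim_range, fl_range m hm, gl_range hm, card_V, ui_edge_count]
    ext n
    simp only [Set.mem_union, Set.mem_Icc]
    omega
  · rw [fl_range m hm, card_V]
    ext n
    simp only [Set.mem_Icc]
    omega
  · intro x y h
    have hb1 := fl_bounds m hm x
    have hb2 := fl_bounds m hm y
    have : gl m ⟨s(x,y), (unionIsolated (pathJoin 6 m) (2*(m-1))).mem_edgeSet.mpr h⟩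
        = 9*m+12 - (fl m x + fl m y) := rfl
    rw [this]; omega

lemma lower (hm : 3 ≤ m) (t : ℕ) (h : IsSEM (unionIsolated (pathJoin 6 m) t)) :
    2*(m-1) ≤ t := by
  obtain ⟨k, f, g, hinj, hrange, hrangef, hmagic⟩ := h
  have hfinj : Function.Injective f := by
    intro a b hab
    have h2 := hinj (a₁ := Sum.inl a) (a₂ := Sum.inl b) (by simpa using hab)
    exact Sum.inl.inj h2
  have hginj : Function.Injective g := by
    intro a b hab
    have h2 := hinj (a₁ := Sum.inr a) (a₂ := Sum.inr b) (by simpa using hab)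
    exact Sum.inr.inj h2
  set p := Fintype.card ((Fin 6 ⊕ Fin m) ⊕ Fin t) with hp
  have hf : ∀ v, 1 ≤ f v ∧ f v ≤ p := by
    intro v
    have h2 : f v ∈ Set.range f := ⟨v, rfl⟩
    rw [hrangef] at h2
    exact h2
  set σ : Sym2 ((Fin 6 ⊕ Fin m) ⊕ Fin t) → ℕ :=
    Sym2.lift ⟨fun a b => f a + f b, fun a b => by ring⟩ with hσ
  have key : ∀ e : (unionIsolated (pathJoin 6 m) t).edgeSet, g e + σ e.1 = k := by
    rintro ⟨e, he⟩
    induction e using Sym2.ind with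
    | _ x y =>
      have hadj : (unionIsolated (pathJoin 6 m) t).Adj x y := (SimpleGraph.mem_edgeSet _).mp he
      have h2 := hmagic x y hadj
      have heq : (⟨s(x,y), (unionIsolated (pathJoin 6 m) t).mem_edgeSet.mpr hadj⟩ :
          (unionIsolated (pathJoin 6 m) t).edgeSet) = ⟨s(x,y), he⟩ := rfl
      rw [heq] at h2
      simp only [hσ, Sym2.lift_mk]
      omega
  have hσb : ∀ e : (unionIsolated (pathJoin 6 m) t).edgeSet, 3 ≤ σ e.1 ∧ σ e.1 ≤ 2*p - 1 := by
    rintro ⟨e, he⟩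
    induction e using Sym2.ind with
    | _ x y =>
      have hadj : (unionIsolated (pathJoin 6 m) t).Adj x y := (SimpleGraph.mem_edgeSet _).mp he
      have hne : x ≠ y := (unionIsolated (pathJoin 6 m) t).ne_of_adj hadj
      have hfx := hf x; have hfy := hf y
      have hne' : f x ≠ f y := fun hc => hne (hfinj hc)
      simp only [hσ, Sym2.lift_mk]
      omega
  have hσinj : Function.Injective
      (fun e : (unionIsolated (pathJoin 6 m) t).edgeSet => σ e.1) := by
    intro e e' he
    apply hginj
    have k1 := key e; have k2 := key e'
    simp only at he
    omega
  have hcard : Nat.card (unionIsolated (pathJoin 6 m) t).edgeSet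
      ≤ Nat.card (Set.Icc 3 (2*p-1) : Set ℕ) := by
    apply Nat.card_le_card_of_injective
      (f := fun e : (unionIsolated (pathJoin 6 m) t).edgeSet =>
        (⟨σ e.1, Set.mem_Icc.mpr (hσb e)⟩ : Set.Icc 3 (2*p-1)))
    intro e e' he
    exact hσinj (congrArg Subtype.val he)
  have h1 : Nat.card (unionIsolated (pathJoin 6 m) t).edgeSet = 6*m+5 := by
    rw [Nat.card_coe_set_eq, ui_edge_count]
  have h2 : Nat.card (Set.Icc 3 (2*p-1) : Set ℕ) = 2*p-3 := by
    rw [Nat.card_coe_set_eq, ← Finset.coe_Icc, Set.ncard_coe_finset, Nat.card_Icc]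
    omega
  have hpval : p = 6 + m + t := by rw [hp, card_V]
  omega

end Main

/-- for every `m ≥ 3`, `μₛ(P₆ + K̄_m) = 2(m − 1)`. -/
theorem stmt12 (m : ℕ) (hm : 3 ≤ m) :
    semDeficiency (pathJoin 6 m) = ((2 * (m - 1) : ℕ) : ℕ∞) := by
  apply le_antisymm
  · exact sInf_le ⟨2*(m-1), upper hm, rfl⟩
  · apply le_sInf
    rintro b ⟨t, ht, rfl⟩
    show ((2*(m-1) : ℕ) : ℕ∞) ≤ ((t : ℕ) : ℕ∞)
    exact_mod_cast lower hm t ht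
end

section
/- For integers n ≥ 2 and m ≥ 1, the join K_{1,n} + K̄_m is super edge-magic if and only if m = 1. -/
open SimpleGraph

lemma card_Icc_nat (a b : ℕ) : Nat.card (Set.Icc a b) = b + 1 - a := by
  rw [← Finset.coe_Icc, Nat.card_coe_set_eq, Set.ncard_coe_finset, Nat.card_Icc]

lemma sem_bound {V : Type*} [Fintype V] [DecidableEq V] {G : SimpleGraph V} (hG : IsSEM G)
    (hne : G.edgeSet.Nonempty) :
    G.edgeSet.ncard + 3 ≤ 2 * Fintype.card V := by
  obtain ⟨k, f, g, hinj, hrange, hrangef, hmagic⟩ := hG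
  set p := Fintype.card V with hp
  have hf_inj : Function.Injective f := fun a b h => by
    have := hinj (a₁ := Sum.inl a) (a₂ := Sum.inl b) (by simpa using h)
    exact Sum.inl.inj this
  have hg_inj : Function.Injective g := fun a b h => by
    have := hinj (a₁ := Sum.inr a) (a₂ := Sum.inr b) (by simpa using h)
    exact Sum.inr.inj this
  have hf_mem : ∀ v, f v ∈ Set.Icc 1 p := fun v => hrangef ▸ Set.mem_range_self v
  have hp2 : 2 ≤ p := by
    obtain ⟨e, he⟩ := hne
    induction e using Sym2.ind with
    | _ x y =>
      have hadj : G.Adj x y := G.mem_edgeSet.mp he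
      exact Fintype.one_lt_card_iff_nontrivial.mpr ⟨x, y, hadj.ne⟩
  set S : Sym2 V → ℕ := Sym2.lift ⟨fun a b => f a + f b, fun a b => add_comm _ _⟩ with hS
  have key : ∀ (e : Sym2 V) (he : e ∈ G.edgeSet), S e + g ⟨e, he⟩ = k := by
    intro e
    induction e using Sym2.ind with
    | _ x y =>
      intro he
      have hadj : G.Adj x y := G.mem_edgeSet.mp he
      have := hmagic x y hadj
      simp only [hS, Sym2.lift_mk]
      omega
  have hmem : ∀ (e : Sym2 V), e ∈ G.edgeSet → S e ∈ Set.Icc 3 (2*p - 1) := by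
    intro e
    induction e using Sym2.ind with
    | _ x y =>
      intro he
      have hadj : G.Adj x y := G.mem_edgeSet.mp he
      have h1 := hf_mem x
      have h2 := hf_mem y
      have h3 : f x ≠ f y := fun h => hadj.ne (hf_inj h)
      simp only [hS, Sym2.lift_mk, Set.mem_Icc] at *
      omega
  have hfin : Finite (Set.Icc 3 (2*p-1) : Set ℕ) := (Set.finite_Icc _ _).to_subtype
  have hSinj : Function.Injective
      (fun e : G.edgeSet => (⟨S e.1, hmem e.1 e.2⟩ : Set.Icc 3 (2*p-1))) := by
    rintro ⟨e1, he1⟩ ⟨e2, he2⟩ h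
    simp only [Subtype.mk.injEq] at h
    have k1 := key e1 he1
    have k2 := key e2 he2
    have : g ⟨e1, he1⟩ = g ⟨e2, he2⟩ := by omega
    exact hg_inj this
  have hcard := Nat.card_le_card_of_injective _ hSinj
  rw [card_Icc_nat, Nat.card_coe_set_eq] at hcard
  omega

lemma adjLR (n m : ℕ) (i : Fin (n+1)) (j : Fin m) :
    (starJoin n m).Adj (Sum.inl i) (Sum.inr j) :=
  ⟨by simp, Or.inl (Or.inr ⟨i, j, rfl, rfl⟩)⟩

lemma adjLL (n m : ℕ) (i : Fin (n+1)) (hi : i ≠ 0) :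
    (starJoin n m).Adj (Sum.inl 0) (Sum.inl i) :=
  ⟨by simp [hi.symm], Or.inl (Or.inl ⟨i, rfl, rfl, hi⟩)⟩

lemma lower_bound (n m : ℕ) : (n+1) * m + n ≤ (starJoin n m).edgeSet.ncard := by
  classical
  set ι : (Fin (n+1) × Fin m) ⊕ Fin n → (starJoin n m).edgeSet := fun x =>
    match x with
    | Sum.inl (i, j) => ⟨s(Sum.inl i, Sum.inr j), (starJoin n m).mem_edgeSet.mpr (adjLR n m i j)⟩
    | Sum.inr i => ⟨s(Sum.inl 0, Sum.inl i.succ),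
        (starJoin n m).mem_edgeSet.mpr (adjLL n m i.succ (Fin.succ_ne_zero i))⟩
  have hι : Function.Injective ι := by
    rintro (⟨i, j⟩ | i) (⟨i', j'⟩ | i') h <;>
      simp only [ι, Subtype.mk.injEq, Sym2.eq_iff] at h
    · rcases h with ⟨h1, h2⟩ | ⟨h1, h2⟩ <;> simp_all
    · rcases h with ⟨h1, h2⟩ | ⟨h1, h2⟩ <;> simp_all
    · rcases h with ⟨h1, h2⟩ | ⟨h1, h2⟩ <;> simp_all
    · rcases h with ⟨h1, h2⟩ | ⟨h1, h2⟩
      · simp only [Sum.inl.injEq] at h2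
        have := Fin.succ_injective _ h2
        simp [this]
      · exact absurd (Sum.inl.inj h1.symm) (Fin.succ_ne_zero i')
  have := Nat.card_le_card_of_injective ι hι
  rw [← Nat.card_coe_set_eq]
  simpa [Nat.card_eq_fintype_card, mul_comm] using this

lemma edge_cases {n m : ℕ} {a b : Fin (n+1) ⊕ Fin m} (h : (starJoin n m).Adj a b) :
    (∃ i : Fin (n+1), i ≠ 0 ∧ s(a,b) = s(Sum.inl 0, Sum.inl i)) ∨
    (∃ (i : Fin (n+1)) (j : Fin m), s(a,b) = s(Sum.inl i, Sum.inr j)) := by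
  obtain ⟨hne, h | h⟩ := h
  · rcases h with ⟨i, rfl, rfl, hi⟩ | ⟨i, j, rfl, rfl⟩
    · exact Or.inl ⟨i, hi, rfl⟩
    · exact Or.inr ⟨i, j, rfl⟩
  · rcases h with ⟨i, rfl, rfl, hi⟩ | ⟨i, j, rfl, rfl⟩
    · exact Or.inl ⟨i, hi, Sym2.eq_swap⟩
    · exact Or.inr ⟨i, j, Sym2.eq_swap⟩

lemma sem_one (n : ℕ) : IsSEM (starJoin n 1) := by
  classical
  set V := Fin (n+1) ⊕ Fin 1
  set G := starJoin n 1 with hG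
  set f : V → ℕ := Sum.elim (fun i => (i : ℕ) + 1) (fun _ => n + 2) with hf
  set S : Sym2 V → ℕ := Sym2.lift ⟨fun a b => f a + f b, fun a b => add_comm _ _⟩ with hS
  set g : G.edgeSet → ℕ := fun e => 3*n + 6 - S e.1 with hg
  -- basic facts about f
  have hfb : ∀ v : V, 1 ≤ f v ∧ f v ≤ n + 2 := by
    rintro (i | j) <;> simp [hf] <;> omega
  have hf_inj : Function.Injective f := by
    rintro (i | j) (i' | j') h
    · simp only [hf, Sum.elim_inl] at h
      exact congrArg Sum.inl (Fin.val_injective (by omega))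
    · simp only [hf, Sum.elim_inl, Sum.elim_inr] at h
      have := i.isLt; omega
    · simp only [hf, Sum.elim_inl, Sum.elim_inr] at h
      have := i'.isLt; omega
    · exact congrArg Sum.inr (Subsingleton.elim j j')
  -- S values on edges, precise shape
  have hS_mk : ∀ a b : V, S s(a, b) = f a + f b := fun a b => Sym2.lift_mk ..
  have hSshape : ∀ (e : Sym2 V), e ∈ G.edgeSet →
      (∃ i : Fin (n+1), 1 ≤ (i:ℕ) ∧ e = s(Sum.inl 0, Sum.inl i) ∧ S e = (i:ℕ) + 2) ∨
      (∃ i : Fin (n+1), e = s(Sum.inl i, Sum.inr 0) ∧ S e = (i:ℕ) + n + 3) := by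
    intro e he
    induction e using Sym2.ind with
    | _ x y =>
      have hadj : G.Adj x y := G.mem_edgeSet.mp he
      rcases edge_cases hadj with ⟨i, hi, hiq⟩ | ⟨i, j, hiq⟩
      · refine Or.inl ⟨i, ?_, hiq, ?_⟩
        · have : (i : ℕ) ≠ 0 := fun h => hi (Fin.ext h)
          omega
        · rw [hiq, hS_mk]; simp [hf]; omega
      · refine Or.inr ⟨i, ?_, ?_⟩
        · rw [hiq]; congr; exact Subsingleton.elim j 0
        · rw [hiq, hS_mk]; simp [hf]; omega
  have hSbound : ∀ (e : Sym2 V), e ∈ G.edgeSet → 3 ≤ S e ∧ S e ≤ 2*n + 3 := by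
    intro e he
    rcases hSshape e he with ⟨i, hi1, _, hSe⟩ | ⟨i, _, hSe⟩ <;>
      (have := i.isLt; omega)
  -- g bounds
  have hgb : ∀ e : G.edgeSet, n + 3 ≤ g e ∧ g e ≤ 3*n + 3 := by
    rintro ⟨e, he⟩
    have := hSbound e he
    simp only [hg]
    omega
  -- S injective on edges, hence g injective
  have hS_inj : ∀ (e₁ e₂ : Sym2 V), e₁ ∈ G.edgeSet → e₂ ∈ G.edgeSet →
      S e₁ = S e₂ → e₁ = e₂ := by
    intro e₁ e₂ h₁ h₂ h
    rcases hSshape e₁ h₁ with ⟨i, hi1, he, hSe⟩ | ⟨i, he, hSe⟩ <;>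
      rcases hSshape e₂ h₂ with ⟨i', hi1', he', hSe'⟩ | ⟨i', he', hSe'⟩
    · have : (i:ℕ) = (i':ℕ) := by omega
      rw [he, he', Fin.val_injective this]
    · have := i'.isLt; have := i.isLt; omega
    · have := i'.isLt; have := i.isLt; omega
    · have : (i:ℕ) = (i':ℕ) := by omega
      rw [he, he', Fin.val_injective this]
  have hg_inj : Function.Injective g := by
    rintro ⟨e₁, h₁⟩ ⟨e₂, h₂⟩ h
    have b₁ := hSbound e₁ h₁
    have b₂ := hSbound e₂ h₂
    simp only [hg] at h
    have : S e₁ = S e₂ := by omega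
    exact Subtype.ext (hS_inj e₁ e₂ h₁ h₂ this)
  -- edge construction for surjectivity
  have hedge : ∀ s : ℕ, 3 ≤ s → s ≤ 2*n + 3 →
      ∃ e ∈ G.edgeSet, S e = s := by
    intro s h3 hub
    by_cases hle : s ≤ n + 2
    · refine ⟨s(Sum.inl 0, Sum.inl ⟨s - 2, by omega⟩),
        G.mem_edgeSet.mpr (adjLL n 1 ⟨s-2, by omega⟩ (by simp [Fin.ext_iff]; omega)), ?_⟩
      rw [hS_mk]; simp [hf]; omega
    · refine ⟨s(Sum.inl ⟨s - (n+3), by omega⟩, Sum.inr 0),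
        G.mem_edgeSet.mpr (adjLR n 1 _ _), ?_⟩
      rw [hS_mk]; simp [hf]; omega
  -- injectivity of the combined labeling
  have hElim_inj : Function.Injective (Sum.elim f g) := by
    rintro (v | e) (v' | e') h
    · exact congrArg Sum.inl (hf_inj h)
    · exfalso
      simp only [Sum.elim_inl, Sum.elim_inr] at h
      have := (hfb v).2; have := (hgb e').1; omega
    · exfalso
      simp only [Sum.elim_inl, Sum.elim_inr] at h
      have := (hfb v').2; have := (hgb e).1; omega
    · exact congrArg Sum.inr (hg_inj h)
  -- range of f
  have hrangef : Set.range f = Set.Icc 1 (n+2) := by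
    ext v
    simp only [Set.mem_range, Set.mem_Icc]
    constructor
    · rintro ⟨x, rfl⟩; exact hfb x
    · rintro ⟨h1, h2⟩
      by_cases hle : v ≤ n + 1
      · exact ⟨Sum.inl ⟨v - 1, by omega⟩, by simp [hf]; omega⟩
      · exact ⟨Sum.inr 0, by simp [hf]; omega⟩
  -- range of Sum.elim f g
  have hrangeElim : Set.range (Sum.elim f g) = Set.Icc 1 (3*n+3) := by
    ext v
    simp only [Set.mem_range, Set.mem_Icc]
    constructor
    · rintro ⟨(x | e), rfl⟩
      · have := hfb x; simp only [Sum.elim_inl]; omega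
      · have := hgb e; simp only [Sum.elim_inr]; omega
    · rintro ⟨h1, h2⟩
      by_cases hle : v ≤ n + 2
      · have hv : v ∈ Set.Icc 1 (n+2) := ⟨h1, hle⟩
        rw [← hrangef] at hv
        obtain ⟨x, hx⟩ := hv
        exact ⟨Sum.inl x, hx⟩
      · obtain ⟨e, he, hSe⟩ := hedge (3*n+6-v) (by omega) (by omega)
        refine ⟨Sum.inr ⟨e, he⟩, ?_⟩
        simp only [Sum.elim_inr, hg]
        omega
  -- cardinality
  have hcardV : Fintype.card V = n + 2 := by
    simp [V]
  have hcard : Fintype.card V + G.edgeSet.ncard = 3*n + 3 := by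
    have h1 : Nat.card (V ⊕ G.edgeSet) = Nat.card (Set.range (Sum.elim f g)) :=
      (Nat.card_range_of_injective hElim_inj).symm
    rw [hrangeElim, card_Icc_nat, Nat.card_sum, Nat.card_eq_fintype_card,
      Nat.card_coe_set_eq] at h1
    omega
  refine ⟨3*n+6, f, g, hElim_inj, ?_, ?_, ?_⟩
  · rw [hcard]; exact hrangeElim
  · rw [hcardV]; exact hrangef
  · intro x y h
    have hb := hSbound s(x,y) (G.mem_edgeSet.mpr h)
    rw [hS_mk] at hb
    have hge : g ⟨s(x,y), G.mem_edgeSet.mpr h⟩ = 3*n+6 - (f x + f y) := by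
      simp only [hg, hS_mk]
    rw [hge]
    omega

/-- for `n ≥ 2` and `m ≥ 1`, the join `K_{1,n} + K̄_m` is super
edge-magic iff `m = 1`. -/
theorem stmt13 (n m : ℕ) (hn : 2 ≤ n) (hm : 1 ≤ m) :
    IsSEM (starJoin n m) ↔ m = 1 := by
  constructor
  · intro hSEM
    by_contra hne
    have hm2 : 2 ≤ m := by omega
    have hlb := lower_bound n m
    have hedge_ne : (starJoin n m).edgeSet.Nonempty :=
      ⟨s(Sum.inl 0, Sum.inr ⟨0, hm⟩), (starJoin n m).mem_edgeSet.mpr (adjLR n m 0 ⟨0, hm⟩)⟩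
    have hub := sem_bound hSEM hedge_ne
    have hcV : Fintype.card (Fin (n+1) ⊕ Fin m) = n + 1 + m := by simp
    rw [hcV] at hub
    have h1 : 2*m ≤ n*m := Nat.mul_le_mul_right m hn
    have h2 : n*2 ≤ n*m := Nat.mul_le_mul_left n hm2
    have h3 : (n+1)*m = n*m + m := by ring
    omega
  · rintro rfl
    exact sem_one n
end

section
/- For all integers n, m ≥ 2, the super edge-magic deficiency of K_{1,n} + K̄_m satisfies ⌈(n−1)(m−1)/2⌉ ≤ μ_s(K_{1,n} + K̄_m) ≤ n(m−1) − 1. -/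
open SimpleGraph

lemma blocks {b q1 r1 q2 r2 : ℕ} (h1 : r1 < b) (h2 : r2 < b)
    (h : q1 * b + r1 = q2 * b + r2) : q1 = q2 ∧ r1 = r2 := by
  have hb : 0 < b := by omega
  have e1 : (q1 * b + r1) / b = q1 := by
    rw [add_comm, Nat.add_mul_div_right _ _ hb, Nat.div_eq_of_lt h1]; omega
  have e2 : (q2 * b + r2) / b = q2 := by
    rw [add_comm, Nat.add_mul_div_right _ _ hb, Nat.div_eq_of_lt h2]; omega
  have : q1 = q2 := by rw [← e1, ← e2, h]
  subst this
  exact ⟨rfl, by omega⟩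

lemma edgeSet_map' {V W : Type*} (f : V ↪ W) (G : SimpleGraph V) :
    (G.map f).edgeSet = Sym2.map f '' G.edgeSet := by
  ext e
  induction e using Sym2.ind with
  | _ a b =>
    simp only [mem_edgeSet, map_adj, Set.mem_image]
    constructor
    · rintro ⟨u, v, h, rfl, rfl⟩
      exact ⟨s(u,v), h, rfl⟩
    · rintro ⟨e', he', hmap⟩
      induction e' using Sym2.ind with
      | _ u v =>
        rw [Sym2.map_pair_eq, Sym2.eq_iff] at hmap
        rcases hmap with ⟨rfl, rfl⟩ | ⟨rfl, rfl⟩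
        · exact ⟨u, v, he', rfl, rfl⟩
        · exact ⟨v, u, he'.symm, rfl, rfl⟩

/-- index of edges -/
def eIdx (n m : ℕ) : Fin n ⊕ Fin (n+1) × Fin m → Sym2 (Fin (n+1) ⊕ Fin m) :=
  Sum.elim (fun i => s(Sum.inl (0 : Fin (n+1)), Sum.inl i.succ))
           (fun p => s(Sum.inl p.1, Sum.inr p.2))

lemma eIdx_injective (n m : ℕ) : Function.Injective (eIdx n m) := by
  rintro (i | ⟨i, j⟩) (i' | ⟨i', j'⟩) h <;>
    simp only [eIdx, Sum.elim_inl, Sum.elim_inr, Sym2.eq_iff] at h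
  · rcases h with ⟨-, h⟩ | ⟨h, -⟩
    · simp only [Sum.inl.injEq] at h
      exact congrArg Sum.inl (Fin.succ_injective _ h)
    · simp only [Sum.inl.injEq] at h
      exact absurd h.symm (Fin.succ_ne_zero i')
  · rcases h with ⟨-, h⟩ | ⟨h, -⟩ <;> simp at h
  · rcases h with ⟨-, h⟩ | ⟨-, h⟩ <;> simp at h
  · rcases h with ⟨h1, h2⟩ | ⟨-, h⟩
    · simp only [Sum.inl.injEq, Sum.inr.injEq] at h1 h2
      simp [Prod.ext_iff, h1, h2]
    · simp at h

lemma starJoin_edgeSet (n m : ℕ) :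
    (starJoin n m).edgeSet = Set.range (eIdx n m) := by
  ext e
  constructor
  · intro he
    induction e using Sym2.ind with
    | _ a b =>
      rw [mem_edgeSet] at he
      obtain ⟨hne, h | h⟩ := he
      · rcases h with ⟨i, rfl, rfl, hi⟩ | ⟨i, j, rfl, rfl⟩
        · exact ⟨Sum.inl (i.pred hi), by simp [eIdx]⟩
        · exact ⟨Sum.inr (i, j), rfl⟩
      · rcases h with ⟨i, rfl, rfl, hi⟩ | ⟨i, j, rfl, rfl⟩
        · exact ⟨Sum.inl (i.pred hi), by simp [eIdx, Sym2.eq_swap]⟩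
        · exact ⟨Sum.inr (i, j), by simp [eIdx, Sym2.eq_swap]⟩
  · rintro ⟨(i | ⟨i, j⟩), rfl⟩
    · rw [eIdx, Sum.elim_inl, mem_edgeSet]
      refine ⟨by simp [(Fin.succ_ne_zero i).symm], Or.inl (Or.inl ⟨i.succ, rfl, rfl, Fin.succ_ne_zero i⟩)⟩
    · rw [eIdx, Sum.elim_inr, mem_edgeSet]
      exact ⟨by simp, Or.inl (Or.inr ⟨i, j, rfl, rfl⟩)⟩

lemma starJoin_ncard (n m : ℕ) : (starJoin n m).edgeSet.ncard = n + (n+1)*m := by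
  rw [starJoin_edgeSet, ← Set.image_univ,
    Set.ncard_image_of_injective _ (eIdx_injective n m), Set.ncard_univ]
  simp [Nat.card_eq_fintype_card]

lemma map_ncard {V W : Type*} (f : V ↪ W) (G : SimpleGraph V) :
    (G.map f).edgeSet.ncard = G.edgeSet.ncard := by
  rw [edgeSet_map', Set.ncard_image_of_injective _ (Sym2.map.injective f.injective)]

def fxL (n : ℕ) (i : Fin (n+1)) : ℕ := if (i:ℕ) = 0 then n + 2 else (i:ℕ) + 1
def fyL (n : ℕ) {m : ℕ} (j : Fin m) : ℕ := if (j:ℕ) = 0 then 1 else ((j:ℕ)+1) * (n+1)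
def isoL (n : ℕ) (k : ℕ) : ℕ :=
  if k < n - 1 then n + 3 + k
  else ((k - (n-1)) / n + 2) * (n+1) + 1 + (k - (n-1)) % n

lemma fxL_bounds (n : ℕ) (i : Fin (n+1)) : 2 ≤ fxL n i ∧ fxL n i ≤ n + 2 := by
  have := i.is_lt
  unfold fxL; split_ifs <;> omega

lemma fxL_inj (n : ℕ) : Function.Injective (fxL n) := by
  intro i j h
  have hi := i.is_lt; have hj := j.is_lt
  unfold fxL at h
  exact Fin.ext (by split_ifs at h <;> omega)

lemma isoL_shape (n m k : ℕ) (hn : 2 ≤ n) (hm : 2 ≤ m) (hk : k < n*m - n - 1) :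
    (k < n - 1 ∧ isoL n k = n + 3 + k) ∨
    (∃ qb r, qb + 3 ≤ m ∧ r < n ∧ isoL n k = (qb+2)*(n+1)+1+r ∧ k = (n-1) + (qb*n + r)) := by
  by_cases hlt : k < n - 1
  · exact Or.inl ⟨hlt, if_pos hlt⟩
  · right
    set a := k - (n-1) with ha
    have hn0 : 0 < n := by omega
    refine ⟨a / n, a % n, ?_, Nat.mod_lt _ hn0, if_neg hlt, ?_⟩
    · have hmul : (m-2) * n + 2 * n = m * n := by
        rw [← Nat.add_mul]; congr 1; omega
      have hcomm : n * m = m * n := Nat.mul_comm _ _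
      have haa : a < (m-2) * n := by omega
      have := (Nat.div_lt_iff_lt_mul hn0).2 haa
      omega
    · have h1 := Nat.div_add_mod a n
      have hc : n * (a / n) = (a / n) * n := Nat.mul_comm _ _
      omega

lemma isoL_inj (n m : ℕ) (hn : 2 ≤ n) (hm : 2 ≤ m) {k k' : ℕ}
    (hk : k < n*m - n - 1) (hk' : k' < n*m - n - 1) (h : isoL n k = isoL n k') : k = k' := by
  rcases isoL_shape n m k hn hm hk with ⟨h1, e1⟩ | ⟨q1, r1, hq1, hr1, e1, d1⟩ <;>
    rcases isoL_shape n m k' hn hm hk' with ⟨h2, e2⟩ | ⟨q2, r2, hq2, hr2, e2, d2⟩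
  · omega
  · exfalso
    have : 2 * (n+1) ≤ (q2+2)*(n+1) := Nat.mul_le_mul_right _ (by omega)
    omega
  · exfalso
    have : 2 * (n+1) ≤ (q1+2)*(n+1) := Nat.mul_le_mul_right _ (by omega)
    omega
  · rw [e1, e2] at h
    obtain ⟨hq, hr⟩ := blocks (b := n+1) (by omega : 1 + r1 < n+1) (by omega : 1 + r2 < n+1)
      (by omega : (q1+2) * (n+1) + (1+r1) = (q2+2) * (n+1) + (1+r2))
    have : q1 = q2 := by omega
    subst this
    omega

lemma fyL_shape (n : ℕ) {m : ℕ} (j : Fin m) :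
    ((j:ℕ) = 0 ∧ fyL n j = 1) ∨
      (∃ c, c = (j:ℕ) + 1 ∧ 2 ≤ c ∧ c ≤ m ∧ fyL n j = c * (n+1)) := by
  have := j.is_lt
  unfold fyL; split_ifs with h
  · exact Or.inl ⟨h, rfl⟩
  · exact Or.inr ⟨(j:ℕ)+1, rfl, by omega, by omega, rfl⟩

lemma fyL_inj (n : ℕ) {m : ℕ} : Function.Injective (fyL n (m := m)) := by
  intro j j' h
  rcases fyL_shape n j with ⟨h0, e⟩ | ⟨c, hcj, hc2, hcm, e⟩ <;>
    rcases fyL_shape n j' with ⟨h0', e'⟩ | ⟨c', hcj', hc2', hcm', e'⟩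
  · exact Fin.ext (by omega)
  · exfalso
    have : 2 * (n+1) ≤ c' * (n+1) := Nat.mul_le_mul_right _ hc2'
    omega
  · exfalso
    have : 2 * (n+1) ≤ c * (n+1) := Nat.mul_le_mul_right _ hc2
    omega
  · rw [e, e'] at h
    have : c = c' := Nat.eq_of_mul_eq_mul_right (by omega) h
    exact Fin.ext (by omega)

lemma fx_ne_fy (n m : ℕ) (hn : 2 ≤ n) (i : Fin (n+1)) (j : Fin m) : fxL n i ≠ fyL n j := by
  obtain ⟨h2, hn2⟩ := fxL_bounds n i
  rcases fyL_shape n j with ⟨-, e⟩ | ⟨c, -, hc2, -, e⟩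
  · omega
  · have : 2 * (n+1) ≤ c * (n+1) := Nat.mul_le_mul_right _ hc2
    omega

lemma fx_ne_iso (n m : ℕ) (hn : 2 ≤ n) (hm : 2 ≤ m) (i : Fin (n+1)) {k : ℕ}
    (hk : k < n*m - n - 1) : fxL n i ≠ isoL n k := by
  obtain ⟨h2, hn2⟩ := fxL_bounds n i
  rcases isoL_shape n m k hn hm hk with ⟨-, e⟩ | ⟨qb, r, -, hr, e, -⟩
  · omega
  · have : 2 * (n+1) ≤ (qb+2) * (n+1) := Nat.mul_le_mul_right _ (by omega)
    omega

lemma fy_ne_iso (n m : ℕ) (hn : 2 ≤ n) (hm : 2 ≤ m) (j : Fin m) {k : ℕ}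
    (hk : k < n*m - n - 1) : fyL n j ≠ isoL n k := by
  rcases isoL_shape n m k hn hm hk with ⟨hlt, e⟩ | ⟨qb, r, hq, hr, e, -⟩ <;>
    rcases fyL_shape n j with ⟨-, e'⟩ | ⟨c, -, hc2, hcm, e'⟩
  · omega
  · have : 2 * (n+1) ≤ c * (n+1) := Nat.mul_le_mul_right _ hc2
    omega
  · have : 2 * (n+1) ≤ (qb+2) * (n+1) := Nat.mul_le_mul_right _ (by omega)
    omega
  · intro hcon
    rw [e, e'] at hcon
    obtain ⟨-, hr0⟩ := blocks (b := n+1) (by omega : 0 < n+1) (by omega : 1 + r < n+1)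
      (by omega : c * (n+1) + 0 = (qb+2) * (n+1) + (1+r))
    omega

def fullL (n m : ℕ) : (Fin (n+1) ⊕ Fin m) ⊕ Fin (n*m - n - 1) → ℕ :=
  Sum.elim (Sum.elim (fxL n) (fyL n)) (fun k => isoL n (k:ℕ))

lemma fullL_inj (n m : ℕ) (hn : 2 ≤ n) (hm : 2 ≤ m) : Function.Injective (fullL n m) := by
  rintro ((i | j) | k) ((i' | j') | k') h <;>
    simp only [fullL, Sum.elim_inl, Sum.elim_inr] at h
  · exact congrArg _ (congrArg _ (fxL_inj n h))
  · exact absurd h (fx_ne_fy n m hn i j')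
  · exact absurd h (fx_ne_iso n m hn hm i k'.is_lt)
  · exact absurd h.symm (fx_ne_fy n m hn i' j)
  · exact congrArg _ (congrArg _ (fyL_inj n h))
  · exact absurd h (fy_ne_iso n m hn hm j k'.is_lt)
  · exact absurd h.symm (fx_ne_iso n m hn hm i' k.is_lt)
  · exact absurd h.symm (fy_ne_iso n m hn hm j' k.is_lt)
  · exact congrArg _ (Fin.ext (isoL_inj n m hn hm k.is_lt k'.is_lt h))



def sumval (n : ℕ) {m : ℕ} : Fin n ⊕ Fin (n+1) × Fin m → ℕ :=
  Sum.elim (fun i => n + 4 + (i:ℕ)) (fun p => fxL n p.1 + fyL n p.2)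

lemma sumval_bounds (n m : ℕ) (hn : 2 ≤ n) (hm : 2 ≤ m) (x : Fin n ⊕ Fin (n+1) × Fin m) :
    3 ≤ sumval n x ∧ sumval n x ≤ m*(n+1) + n + 2 := by
  rcases x with i | ⟨i, j⟩
  · have hi := i.is_lt
    have : 2 * (n+1) ≤ m * (n+1) := Nat.mul_le_mul_right _ hm
    simp only [sumval, Sum.elim_inl]
    omega
  · obtain ⟨h2, hn2⟩ := fxL_bounds n i
    simp only [sumval, Sum.elim_inr]
    rcases fyL_shape n j with ⟨-, e⟩ | ⟨c, -, hc2, hcm, e⟩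
    · have : 2 * (n+1) ≤ m * (n+1) := Nat.mul_le_mul_right _ hm
      omega
    · have h3 : c * (n+1) ≤ m * (n+1) := Nat.mul_le_mul_right _ hcm
      have h4 : 2 * (n+1) ≤ c * (n+1) := Nat.mul_le_mul_right _ hc2
      omega

lemma sumval_inj (n m : ℕ) (hn : 2 ≤ n) (hm : 2 ≤ m) :
    Function.Injective (sumval n (m := m)) := by
  rintro (i | ⟨i, j⟩) (i' | ⟨i', j'⟩) h <;>
    simp only [sumval, Sum.elim_inl, Sum.elim_inr] at h
  · have := i.is_lt; have := i'.is_lt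
    exact congrArg _ (Fin.ext (by omega))
  · exfalso
    have hi := i.is_lt
    obtain ⟨h2, hn2⟩ := fxL_bounds n i'
    rcases fyL_shape n j' with ⟨-, e⟩ | ⟨c, -, hc2, -, e⟩
    · omega
    · have : 2 * (n+1) ≤ c * (n+1) := Nat.mul_le_mul_right _ hc2
      omega
  · exfalso
    have hi := i'.is_lt
    obtain ⟨h2, hn2⟩ := fxL_bounds n i
    rcases fyL_shape n j with ⟨-, e⟩ | ⟨c, -, hc2, -, e⟩
    · omega
    · have : 2 * (n+1) ≤ c * (n+1) := Nat.mul_le_mul_right _ hc2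
      omega
  · obtain ⟨h2, hn2⟩ := fxL_bounds n i
    obtain ⟨h2', hn2'⟩ := fxL_bounds n i'
    rcases fyL_shape n j with ⟨hj0, e⟩ | ⟨c, hcj, hc2, hcm, e⟩ <;>
      rcases fyL_shape n j' with ⟨hj0', e'⟩ | ⟨c', hcj', hc2', hcm', e'⟩
    · have : i = i' := fxL_inj n (by omega)
      subst this
      have : j = j' := Fin.ext (by omega)
      subst this
      rfl
    · exfalso
      have : 2 * (n+1) ≤ c' * (n+1) := Nat.mul_le_mul_right _ hc2'
      omega
    · exfalso
      have : 2 * (n+1) ≤ c * (n+1) := Nat.mul_le_mul_right _ hc2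
      omega
    · rw [e, e'] at h
      obtain ⟨hq, hr⟩ := blocks (b := n+1)
        (by omega : fxL n i - 2 < n+1) (by omega : fxL n i' - 2 < n+1)
        (by omega : c * (n+1) + (fxL n i - 2) = c' * (n+1) + (fxL n i' - 2))
      have : i = i' := fxL_inj n (by omega)
      subst this
      have : j = j' := Fin.ext (by omega)
      subst this
      rfl

def sumf {V : Type*} (f : V → ℕ) : Sym2 V → ℕ :=
  Sym2.lift ⟨fun a b => f a + f b, fun _ _ => by ring⟩

lemma sumf_mk {V : Type*} (f : V → ℕ) (a b : V) : sumf f s(a, b) = f a + f b := rfl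

def eIdx2 (n m : ℕ) (x : Fin n ⊕ Fin (n+1) × Fin m) :
    Sym2 ((Fin (n+1) ⊕ Fin m) ⊕ Fin (n*m - n - 1)) :=
  Sym2.map Sum.inl (eIdx n m x)

lemma eIdx2_edgeSet (n m : ℕ) :
    (unionIsolated (starJoin n m) (n*m - n - 1)).edgeSet = Set.range (eIdx2 n m) := by
  rw [unionIsolated, edgeSet_map', starJoin_edgeSet, ← Set.range_comp]
  rfl

lemma sumf_eIdx2 (n m : ℕ) (x : Fin n ⊕ Fin (n+1) × Fin m) :
    sumf (fullL n m) (eIdx2 n m x) = sumval n x := by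
  rcases x with i | ⟨i, j⟩
  · simp [eIdx2, eIdx, sumf, sumval, fullL, fxL, Fin.val_succ]
    omega
  · simp [eIdx2, eIdx, sumf, sumval, fullL, fxL, Fin.val_succ]

lemma upper_sem (n m : ℕ) (hn : 2 ≤ n) (hm : 2 ≤ m) :
    IsSEM (unionIsolated (starJoin n m) (n*m - n - 1)) := by
  classical
  set t := n*m - n - 1 with ht
  set G' := unionIsolated (starJoin n m) t with hG'
  have hncard : G'.edgeSet.ncard = m*(n+1) + n := by
    rw [hG', unionIsolated, map_ncard, starJoin_ncard]
    ring
  have hcardV : Fintype.card ((Fin (n+1) ⊕ Fin m) ⊕ Fin t) = m*(n+1) := by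
    simp only [Fintype.card_sum, Fintype.card_fin]
    have : n * m = m * n := Nat.mul_comm _ _
    have : m * (n+1) = m * n + m := by ring
    have h2n : 2 * n ≤ m * n := Nat.mul_le_mul_right _ hm
    omega
  have hcanon : ∀ e : G'.edgeSet, ∃ x, (e : Sym2 _) = eIdx2 n m x := by
    rintro ⟨e, he⟩
    rw [hG', eIdx2_edgeSet] at he
    obtain ⟨x, hx⟩ := he
    exact ⟨x, hx.symm⟩
  have hsum_bounds : ∀ e : G'.edgeSet,
      3 ≤ sumf (fullL n m) (e : Sym2 _) ∧ sumf (fullL n m) (e : Sym2 _) ≤ (m*(n+1) + n) + 2 := by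
    intro e
    obtain ⟨x, hx⟩ := hcanon e
    rw [hx, sumf_eIdx2]
    exact sumval_bounds n m hn hm x
  have hfull_bounds : ∀ v, 1 ≤ fullL n m v ∧ fullL n m v ≤ m*(n+1) := by
    rintro ((i | j) | k)
    · obtain ⟨h2, hn2⟩ := fxL_bounds n i
      have : 2 * (n+1) ≤ m * (n+1) := Nat.mul_le_mul_right _ hm
      simp only [fullL, Sum.elim_inl]
      omega
    · simp only [fullL, Sum.elim_inl, Sum.elim_inr]
      rcases fyL_shape n j with ⟨-, e⟩ | ⟨c, -, hc2, hcm, e⟩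
      · have : 2 * (n+1) ≤ m * (n+1) := Nat.mul_le_mul_right _ hm
        omega
      · have h1 : c * (n+1) ≤ m * (n+1) := Nat.mul_le_mul_right _ hcm
        have h2 : 2 * (n+1) ≤ c * (n+1) := Nat.mul_le_mul_right _ hc2
        omega
    · simp only [fullL, Sum.elim_inr]
      rcases isoL_shape n m (k : ℕ) hn hm k.is_lt with ⟨hlt, e⟩ | ⟨qb, r, hq, hr, e, -⟩
      · have : 2 * (n+1) ≤ m * (n+1) := Nat.mul_le_mul_right _ hm
        omega
      · have h1 : ((qb+2)+1) * (n+1) ≤ m * (n+1) := Nat.mul_le_mul_right _ (by omega)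
        have h2 : ((qb+2)+1) * (n+1) = (qb+2) * (n+1) + (n+1) := Nat.succ_mul _ _
        omega
  have hginj : ∀ e e' : G'.edgeSet,
      (m*(n+1) + (m*(n+1) + n) + 3) - sumf (fullL n m) (e : Sym2 _)
        = (m*(n+1) + (m*(n+1) + n) + 3) - sumf (fullL n m) (e' : Sym2 _) → e = e' := by
    intro e e' hee
    obtain ⟨x, hx⟩ := hcanon e
    obtain ⟨x', hx'⟩ := hcanon e'
    obtain ⟨-, hb⟩ := hsum_bounds e
    obtain ⟨-, hb'⟩ := hsum_bounds e'
    have hss : sumf (fullL n m) (e : Sym2 _) = sumf (fullL n m) (e' : Sym2 _) := by omega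
    rw [hx, hx', sumf_eIdx2, sumf_eIdx2] at hss
    have : x = x' := sumval_inj n m hn hm hss
    exact Subtype.ext (by rw [hx, hx', this])
  have hElimInj : Function.Injective (Sum.elim (fullL n m)
      (fun e : G'.edgeSet => (m*(n+1) + (m*(n+1) + n) + 3) - sumf (fullL n m) (e : Sym2 _))) := by
    rintro (v | e) (v' | e') h <;> simp only [Sum.elim_inl, Sum.elim_inr] at h
    · exact congrArg _ (fullL_inj n m hn hm h)
    · exfalso
      obtain ⟨-, h1⟩ := hfull_bounds v
      obtain ⟨-, h2⟩ := hsum_bounds e'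
      omega
    · exfalso
      obtain ⟨-, h1⟩ := hfull_bounds v'
      obtain ⟨-, h2⟩ := hsum_bounds e
      omega
    · exact congrArg _ (hginj e e' h)
  refine ⟨m*(n+1) + (m*(n+1) + n) + 3, fullL n m,
    fun e => (m*(n+1) + (m*(n+1) + n) + 3) - sumf (fullL n m) (e : Sym2 _), hElimInj, ?_, ?_, ?_⟩
  · -- range of Sum.elim
    rw [hcardV, hncard]
    have hicc : (Set.Icc 1 (m*(n+1) + (m*(n+1) + n))).ncard = m*(n+1) + (m*(n+1) + n) := by
      rw [← Finset.coe_Icc, Set.ncard_coe_finset, Nat.card_Icc]; omega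
    apply Set.eq_of_subset_of_ncard_le
    · rintro _ ⟨(v | e), rfl⟩
      · obtain ⟨h1, h2⟩ := hfull_bounds v
        simp only [Sum.elim_inl, Set.mem_Icc]
        omega
      · obtain ⟨h1, h2⟩ := hsum_bounds e
        simp only [Sum.elim_inr, Set.mem_Icc]
        omega
    · rw [hicc, ← Set.image_univ, Set.ncard_image_of_injective _ hElimInj,
        Set.ncard_univ, Nat.card_sum, Nat.card_eq_fintype_card, hcardV,
        Nat.card_coe_set_eq, hncard]
    · exact (Set.finite_Icc _ _)
  · -- range of fullL
    rw [hcardV]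
    have hicc : (Set.Icc 1 (m*(n+1))).ncard = m*(n+1) := by
      rw [← Finset.coe_Icc, Set.ncard_coe_finset, Nat.card_Icc]; omega
    apply Set.eq_of_subset_of_ncard_le
    · rintro _ ⟨v, rfl⟩
      obtain ⟨h1, h2⟩ := hfull_bounds v
      simp only [Set.mem_Icc]
      omega
    · rw [hicc, ← Set.image_univ, Set.ncard_image_of_injective _ (fullL_inj n m hn hm),
        Set.ncard_univ, Nat.card_eq_fintype_card, hcardV]
    · exact (Set.finite_Icc _ _)
  · -- magic
    intro x y hadj
    have hmem : s(x, y) ∈ G'.edgeSet := G'.mem_edgeSet.mpr hadj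
    obtain ⟨-, hb⟩ := hsum_bounds ⟨s(x,y), hmem⟩
    rw [sumf_mk] at hb
    have hval : (fun e : G'.edgeSet =>
        m*(n+1) + (m*(n+1) + n) + 3 - sumf (fullL n m) (e : Sym2 _))
          ⟨s(x,y), hmem⟩
        = m*(n+1) + (m*(n+1) + n) + 3 - (fullL n m x + fullL n m y) := rfl
    rw [hval]
    omega


lemma lower_bound_s14 (n m t : ℕ) (hn : 2 ≤ n) (hm : 2 ≤ m)
    (h : IsSEM (unionIsolated (starJoin n m) t)) : ((n-1)*(m-1)+1)/2 ≤ t := by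
  classical
  obtain ⟨k, f, g, hinj, hrange, hfrange, hmagic⟩ := h
  have hcardV : Fintype.card ((Fin (n+1) ⊕ Fin m) ⊕ Fin t) = n + 1 + m + t := by
    simp [Fintype.card_sum, Fintype.card_fin]
  have hncard : (unionIsolated (starJoin n m) t).edgeSet.ncard = n + (n+1)*m := by
    rw [unionIsolated, map_ncard, starJoin_ncard]
  have hfmem : ∀ v, 1 ≤ f v ∧ f v ≤ n + 1 + m + t := by
    intro v
    have : f v ∈ Set.range f := Set.mem_range_self v
    rw [hfrange, hcardV] at this
    exact this
  have hfinj : Function.Injective f := by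
    intro a b hab
    have := hinj (a₁ := Sum.inl a) (a₂ := Sum.inl b) (by simpa using hab)
    exact Sum.inl.inj this
  have hsum : ∀ e : (unionIsolated (starJoin n m) t).edgeSet, sumf f (e : Sym2 _) + g e = k := by
    rintro ⟨e, he⟩
    induction e using Sym2.ind with
    | _ x y =>
      have hadj : (unionIsolated (starJoin n m) t).Adj x y := (unionIsolated (starJoin n m) t).mem_edgeSet.mp he
      have hmg := hmagic x y hadj
      have heq : (⟨s(x,y), (unionIsolated (starJoin n m) t).mem_edgeSet.mpr hadj⟩ : (unionIsolated (starJoin n m) t).edgeSet) = ⟨s(x,y), he⟩ :=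
        Subtype.ext rfl
      rw [heq] at hmg
      rw [sumf_mk]
      omega
  have hsumb : ∀ e : (unionIsolated (starJoin n m) t).edgeSet,
      3 ≤ sumf f (e : Sym2 _) ∧ sumf f (e : Sym2 _) ≤ 2*(n + 1 + m + t) - 1 := by
    rintro ⟨e, he⟩
    induction e using Sym2.ind with
    | _ x y =>
      have hadj : (unionIsolated (starJoin n m) t).Adj x y := (unionIsolated (starJoin n m) t).mem_edgeSet.mp he
      have hne : f x ≠ f y := fun hc => hadj.ne (hfinj hc)
      obtain ⟨h1, h2⟩ := hfmem x
      obtain ⟨h3, h4⟩ := hfmem y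
      rw [sumf_mk]
      omega
  have hS : Function.Injective (fun e : (unionIsolated (starJoin n m) t).edgeSet => sumf f (e : Sym2 _)) := by
    intro e e' hee
    simp only at hee
    have h1 := hsum e
    have h2 := hsum e'
    have : g e = g e' := by omega
    have := hinj (a₁ := Sum.inr e) (a₂ := Sum.inr e') (by simpa using this)
    exact Sum.inr.inj this
  have hqle : (unionIsolated (starJoin n m) t).edgeSet.ncard ≤ 2*(n + 1 + m + t) - 3 := by
    have hicc : (Set.Icc 3 (2*(n + 1 + m + t) - 1)).ncard = 2*(n + 1 + m + t) - 3 := by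
      rw [← Finset.coe_Icc, Set.ncard_coe_finset, Nat.card_Icc]; omega
    calc (unionIsolated (starJoin n m) t).edgeSet.ncard = Nat.card (unionIsolated (starJoin n m) t).edgeSet := (Nat.card_coe_set_eq _).symm
      _ = (Set.range (fun e : (unionIsolated (starJoin n m) t).edgeSet => sumf f (e : Sym2 _))).ncard := by
          rw [← Set.image_univ, Set.ncard_image_of_injective _ hS, Set.ncard_univ]
      _ ≤ (Set.Icc 3 (2*(n + 1 + m + t) - 1)).ncard := by
          apply Set.ncard_le_ncard _ (Set.finite_Icc _ _)
          rintro _ ⟨e, rfl⟩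
          exact Set.mem_Icc.mpr ⟨(hsumb e).1, (hsumb e).2⟩
      _ = 2*(n + 1 + m + t) - 3 := hicc
  rw [hncard] at hqle
  obtain ⟨a, rfl⟩ : ∃ a, n = a + 2 := ⟨n - 2, by omega⟩
  obtain ⟨b, rfl⟩ : ∃ b, m = b + 2 := ⟨m - 2, by omega⟩
  have hid : (a + 2 - 1) * (b + 2 - 1) = a*b + a + b + 1 := by
    have ha : a + 2 - 1 = a + 1 := by omega
    have hb : b + 2 - 1 = b + 1 := by omega
    rw [ha, hb]; ring
  rw [hid]
  have h3 : (a + 2 + 1) * (b + 2) = a*b + 3*b + 2*a + 6 := by ring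
  rw [h3] at hqle
  omega

/-- for `n, m ≥ 2`,
`⌈(n−1)(m−1)/2⌉ ≤ μₛ(K_{1,n} + K̄_m) ≤ n(m−1) − 1`. -/
theorem stmt14 (n m : ℕ) (hn : 2 ≤ n) (hm : 2 ≤ m) :
    ((((n - 1) * (m - 1) + 1) / 2 : ℕ) : ℕ∞) ≤ semDeficiency (starJoin n m) ∧
    semDeficiency (starJoin n m) ≤ ((n * (m - 1) - 1 : ℕ) : ℕ∞) := by
  constructor
  · rw [semDeficiency]
    apply le_sInf
    rintro x ⟨t, ht, rfl⟩
    exact Nat.cast_le.mpr (lower_bound_s14 n m t hn hm ht)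
  · rw [semDeficiency]
    have heq : n * (m - 1) - 1 = n * m - n - 1 := by
      obtain ⟨b, rfl⟩ : ∃ b, m = b + 2 := ⟨m - 2, by omega⟩
      have h1 : b + 2 - 1 = b + 1 := by omega
      rw [h1]
      have h2 : n * (b + 2) = n * (b + 1) + n := by ring
      omega
    exact sInf_le ⟨n * (m - 1) - 1,
      by rw [Set.mem_setOf_eq, heq]; exact upper_sem n m hn hm, rfl⟩
end

section
/- For every odd integer n ≥ 3 and every integer m ≥ 2, μ_s(C_n + K̄_m) ≤ mn − (n+m) + 1, i.e., C_n + K̄_m ∪ (mn − n − m + 1)K_1 is super edge-magic. -/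
open SimpleGraph

section AuxSEM


/-! Auxiliary labeling functions -/

def fuL (a i : ℕ) : ℕ := if i % 2 = 0 then a + 2 + i / 2 else 2 * a + 2 + (i + 1) / 2

def fvL (n j : ℕ) : ℕ := if j = 0 then 1 else (j + 1) * n + 1

lemma fuL_mem (a i : ℕ) (hi : i ≤ 2 * a) : a + 2 ≤ fuL a i ∧ fuL a i ≤ 3 * a + 2 := by
  unfold fuL; split <;> omega

lemma fuL_inj (a i i' : ℕ) (hi : i ≤ 2 * a) (hi' : i' ≤ 2 * a)
    (h : fuL a i = fuL a i') : i = i' := by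
  unfold fuL at h; split at h <;> split at h <;> omega

lemma fuL_surj (a v : ℕ) (h1 : a + 2 ≤ v) (h2 : v ≤ 3 * a + 2) :
    ∃ i ≤ 2 * a, fuL a i = v := by
  by_cases hv : v ≤ 2 * a + 2
  · exact ⟨2 * (v - a - 2), by omega, by unfold fuL; split <;> omega⟩
  · exact ⟨2 * (v - (2 * a + 2)) - 1, by omega, by unfold fuL; split <;> omega⟩

lemma fuL_cycle_sum (a i : ℕ) (hi : i + 1 ≤ 2 * a) :
    fuL a i + fuL a (i + 1) = 3 * a + 5 + i := by
  unfold fuL; split <;> split <;> omega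

lemma fuL_close_sum (a : ℕ) : fuL a (2 * a) + fuL a 0 = 3 * a + 4 := by
  unfold fuL; split <;> split <;> omega

lemma fvL_zero (n : ℕ) : fvL n 0 = 1 := by unfold fvL; rw [if_pos rfl]

lemma fvL_pos (n j : ℕ) : 1 ≤ fvL n j := by unfold fvL; split <;> omega

lemma fvL_lb (n j : ℕ) (hj : 1 ≤ j) : 2 * n + 1 ≤ fvL n j := by
  unfold fvL
  rw [if_neg (by omega)]
  have := Nat.mul_le_mul_right n (show 2 ≤ j + 1 by omega)
  omega

lemma fvL_ub (n m j : ℕ) (hj : j + 1 ≤ m) : fvL n j ≤ m * n + 1 := by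
  unfold fvL; split
  · omega
  · have := Nat.mul_le_mul_right n hj; omega

lemma fvL_mono (n j j' : ℕ) (hj : 1 ≤ j) (h : j < j') : fvL n j + n ≤ fvL n j' := by
  unfold fvL
  rw [if_neg (by omega), if_neg (by omega)]
  have := Nat.mul_le_mul_right n (show j + 2 ≤ j' + 1 by omega)
  have h2 : (j + 2) * n = (j + 1) * n + n := by ring
  omega

lemma fuL_ne_fvL (n a i j : ℕ) (hn : n = 2 * a + 1) (hi : i ≤ 2 * a) :
    fuL a i ≠ fvL n j := by
  have h1 := fuL_mem a i hi
  rcases Nat.eq_zero_or_pos j with rfl | hj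
  · have := fvL_zero n; omega
  · have := fvL_lb n j hj; omega

lemma join_sum_inj (n a i i' j j' : ℕ) (hn : n = 2 * a + 1) (hi : i ≤ 2 * a) (hi' : i' ≤ 2 * a)
    (h : fuL a i + fvL n j = fuL a i' + fvL n j') : i = i' ∧ j = j' := by
  have hb := fuL_mem a i hi
  have hb' := fuL_mem a i' hi'
  have hj : j = j' := by
    rcases Nat.lt_trichotomy j j' with hlt | heq | hlt
    · exfalso
      rcases Nat.eq_zero_or_pos j with rfl | hjp
      · have := fvL_lb n j' (by omega); have := fvL_zero n; omega
      · have := fvL_mono n j j' hjp hlt; omega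
    · exact heq
    · exfalso
      rcases Nat.eq_zero_or_pos j' with rfl | hjp
      · have := fvL_lb n j (by omega); have := fvL_zero n; omega
      · have := fvL_mono n j' j hjp hlt; omega
  subst hj
  exact ⟨fuL_inj a i i' hi hi' (by omega), rfl⟩

lemma cycle_ne_join (n a i1 j1 i j : ℕ) (hn : n = 2 * a + 1)
    (hi1 : i1 < n) (hj1 : j1 < n)
    (hc : j1 = i1 + 1 ∨ (i1 = n - 1 ∧ j1 = 0)) (hi : i ≤ 2 * a) :
    fuL a i1 + fuL a j1 ≠ fuL a i + fvL n j := by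
  have hbi := fuL_mem a i hi
  have hcy : 3 * a + 4 ≤ fuL a i1 + fuL a j1 ∧ fuL a i1 + fuL a j1 ≤ 5 * a + 4 := by
    rcases hc with hc | ⟨hc1, hc2⟩
    · subst hc
      have := fuL_cycle_sum a i1 (by omega)
      omega
    · subst hc2
      have h2 : i1 = 2 * a := by omega
      subst h2
      have := fuL_close_sum a
      omega
  rcases Nat.eq_zero_or_pos j with rfl | hj
  · have := fvL_zero n; omega
  · have := fvL_lb n j hj; omega


def pairSum {V : Type*} (f : V → ℕ) : Sym2 V → ℕ :=
  Sym2.lift ⟨fun x y => f x + f y, fun x y => by ring⟩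

@[simp] lemma pairSum_mk {V : Type*} (f : V → ℕ) (x y : V) :
    pairSum f s(x, y) = f x + f y := rfl

def VU (n m t : ℕ) (i : Fin n) : (Fin n ⊕ Fin m) ⊕ Fin t := Sum.inl (Sum.inl i)

def VV (n m t : ℕ) (j : Fin m) : (Fin n ⊕ Fin m) ⊕ Fin t := Sum.inl (Sum.inr j)

lemma adjUV (n m t : ℕ) (i : Fin n) (j : Fin m) :
    (unionIsolated (cycleJoin n m) t).Adj (VU n m t i) (VV n m t j) := by
  rw [unionIsolated, SimpleGraph.map_adj]
  refine ⟨Sum.inl i, Sum.inr j, ?_, rfl, rfl⟩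
  rw [cycleJoin, SimpleGraph.fromRel_adj]
  exact ⟨by simp, Or.inl (Or.inr ⟨i, j, rfl, rfl⟩)⟩

lemma adjUU (n m t : ℕ) (i j : Fin n)
    (h : (j : ℕ) = (i : ℕ) + 1 ∨ ((i : ℕ) = n - 1 ∧ (j : ℕ) = 0)) (hne : (i : ℕ) ≠ (j : ℕ)) :
    (unionIsolated (cycleJoin n m) t).Adj (VU n m t i) (VU n m t j) := by
  rw [unionIsolated, SimpleGraph.map_adj]
  refine ⟨Sum.inl i, Sum.inl j, ?_, rfl, rfl⟩
  rw [cycleJoin, SimpleGraph.fromRel_adj]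
  refine ⟨?_, Or.inl (Or.inl ⟨i, j, rfl, rfl, h⟩)⟩
  intro hc
  apply hne
  have : i = j := by injection hc
  rw [this]

lemma edge_class (n m t : ℕ) (e : (unionIsolated (cycleJoin n m) t).edgeSet) :
    (∃ i j : Fin n, ((j : ℕ) = (i : ℕ) + 1 ∨ ((i : ℕ) = n - 1 ∧ (j : ℕ) = 0)) ∧
      (e : Sym2 ((Fin n ⊕ Fin m) ⊕ Fin t)) = s(VU n m t i, VU n m t j)) ∨
    (∃ (i : Fin n) (j : Fin m),
      (e : Sym2 ((Fin n ⊕ Fin m) ⊕ Fin t)) = s(VU n m t i, VV n m t j)) := by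
  obtain ⟨e, he⟩ := e
  induction e using Sym2.ind with
  | _ x y =>
    rw [SimpleGraph.mem_edgeSet, unionIsolated, SimpleGraph.map_adj] at he
    obtain ⟨x', y', hadj, rfl, rfl⟩ := he
    rw [cycleJoin, SimpleGraph.fromRel_adj] at hadj
    obtain ⟨hne, h | h⟩ := hadj
    · rcases h with ⟨i, j, rfl, rfl, hc⟩ | ⟨i, j, rfl, rfl⟩
      · exact Or.inl ⟨i, j, hc, rfl⟩
      · exact Or.inr ⟨i, j, rfl⟩
    · rcases h with ⟨i, j, rfl, rfl, hc⟩ | ⟨i, j, rfl, rfl⟩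
      · exact Or.inl ⟨i, j, hc, Sym2.eq_swap⟩
      · exact Or.inr ⟨i, j, Sym2.eq_swap⟩

def bigF (n m a t : ℕ) (iso : Fin t → ℕ) : (Fin n ⊕ Fin m) ⊕ Fin t → ℕ :=
  Sum.elim (Sum.elim (fun i : Fin n => fuL a i) (fun j : Fin m => fvL n j)) iso

@[simp] lemma bigF_VU (n m a t : ℕ) (iso : Fin t → ℕ) (i : Fin n) :
    bigF n m a t iso (VU n m t i) = fuL a i := rfl

@[simp] lemma bigF_VV (n m a t : ℕ) (iso : Fin t → ℕ) (j : Fin m) :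
    bigF n m a t iso (VV n m t j) = fvL n j := rfl

@[simp] lemma bigF_inr (n m a t : ℕ) (iso : Fin t → ℕ) (k : Fin t) :
    bigF n m a t iso (Sum.inr k) = iso k := rfl


lemma fvL_inj' (n j j' : ℕ) (hn : 1 ≤ n) (h : fvL n j = fvL n j') : j = j' := by
  rcases Nat.lt_trichotomy j j' with hlt | heq | hlt
  · exfalso
    rcases Nat.eq_zero_or_pos j with rfl | hj
    · have := fvL_lb n j' (by omega); have := fvL_zero n; omega
    · have := fvL_mono n j j' hj hlt; omega
  · exact heq
  · exfalso
    rcases Nat.eq_zero_or_pos j' with rfl | hj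
    · have := fvL_lb n j (by omega); have := fvL_zero n; omega
    · have := fvL_mono n j' j hj hlt; omega


lemma isSEM_of_sums {V : Type*} [Fintype V] (G : SimpleGraph V) (f : V → ℕ) (c d : ℕ)
    (hcd : c ≤ d)
    (hfinj : Function.Injective f)
    (hf : Set.range f = Set.Icc 1 (Fintype.card V))
    (hsinj : Function.Injective (fun e : G.edgeSet => pairSum f e.1))
    (hsrange : Set.range (fun e : G.edgeSet => pairSum f e.1) = Set.Icc c d) :
    IsSEM G := by
  set p := Fintype.card V with hp
  set S : G.edgeSet → ℕ := fun e => pairSum f e.1 with hS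
  have hSmem : ∀ e, c ≤ S e ∧ S e ≤ d := by
    intro e
    have : S e ∈ Set.Icc c d := hsrange ▸ Set.mem_range_self e
    exact this
  have hq : G.edgeSet.ncard = d + 1 - c := by
    have h1 : Nat.card G.edgeSet = Nat.card (Set.Icc c d : Set ℕ) := by
      rw [← Nat.card_range_of_injective hsinj, hsrange]
    rw [← Nat.card_coe_set_eq, h1, Nat.card_eq_card_toFinset]
    simp
  refine ⟨p + d + 1, f, fun e => p + d + 1 - S e, ?_, ?_, ?_, ?_⟩
  · rintro (x | e) (y | e') h
    · simp only [Sum.elim_inl] at h; exact congrArg Sum.inl (hfinj h)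
    · exfalso
      simp only [Sum.elim_inl, Sum.elim_inr] at h
      have h1 : f x ≤ p := by
        have : f x ∈ Set.Icc 1 p := hf ▸ Set.mem_range_self x
        exact this.2
      have := (hSmem e').2
      omega
    · exfalso
      simp only [Sum.elim_inl, Sum.elim_inr] at h
      have h1 : f y ≤ p := by
        have : f y ∈ Set.Icc 1 p := hf ▸ Set.mem_range_self y
        exact this.2
      have := (hSmem e).2
      omega
    · simp only [Sum.elim_inr] at h
      have h1 := (hSmem e).2; have h2 := (hSmem e').2
      have : S e = S e' := by omega
      exact congrArg Sum.inr (hsinj this)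
  · rw [Set.Sum.elim_range, hf, hq]
    have hg : Set.range (fun e : G.edgeSet => p + d + 1 - S e) = Set.Icc (p + 1) (p + d + 1 - c) := by
      ext y
      constructor
      · rintro ⟨e, rfl⟩
        have h1 := hSmem e
        simp only [Set.mem_Icc]; omega
      · intro hy
        simp only [Set.mem_Icc] at hy
        have : p + d + 1 - y ∈ Set.Icc c d := by simp only [Set.mem_Icc]; omega
        rw [← hsrange] at this
        obtain ⟨e, he⟩ := this
        exact ⟨e, by simp only; omega⟩
    rw [hg]
    ext y
    simp only [Set.mem_union, Set.mem_Icc]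
    omega
  · rw [hf]
  · intro x y h
    have hmem := hSmem ⟨s(x, y), G.mem_edgeSet.mpr h⟩
    simp only [hS, pairSum_mk] at hmem ⊢
    omega


theorem stmt16_aux (n m : ℕ) (hn : 3 ≤ n) (hodd : Odd n) (hm : 2 ≤ m) :
    IsSEM (unionIsolated (cycleJoin n m) (m * n - (n + m) + 1)) := by
  obtain ⟨a, hna0⟩ := hodd
  have hna : n = 2 * a + 1 := by omega
  have ha : 1 ≤ a := by omega
  have h2n : 2 * n ≤ m * n := Nat.mul_le_mul_right n hm
  have hnm : n + m ≤ m * n := by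
    have := Nat.add_le_mul hm (show 2 ≤ n by omega); omega
  set t := m * n - (n + m) + 1 with htdef
  have ht : n + m + t = m * n + 1 := by omega
  -- the labeling of real vertices
  set f0 : Fin n ⊕ Fin m → ℕ :=
    Sum.elim (fun i : Fin n => fuL a i) (fun j : Fin m => fvL n j) with hf0def
  have hf0u : ∀ i : Fin n, f0 (Sum.inl i) = fuL a i := fun _ => rfl
  have hf0v : ∀ j : Fin m, f0 (Sum.inr j) = fvL n j := fun _ => rfl
  have hf0inj : Function.Injective f0 := by
    rintro (i | j) (i' | j') h
    · rw [hf0u, hf0u] at h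
      exact congrArg Sum.inl (Fin.ext (fuL_inj a i i' (by omega) (by omega) h))
    · rw [hf0u, hf0v] at h
      exact absurd h (fuL_ne_fvL n a i j' hna (by omega))
    · rw [hf0v, hf0u] at h
      exact absurd h.symm (fuL_ne_fvL n a i' j hna (by omega))
    · rw [hf0v, hf0v] at h
      exact congrArg Sum.inr (Fin.ext (fvL_inj' n j j' (by omega) h))
  set used : Finset ℕ := Finset.image f0 Finset.univ with huseddef
  have hmemused : ∀ x : Fin n ⊕ Fin m, f0 x ∈ used :=
    fun x => Finset.mem_image_of_mem f0 (Finset.mem_univ x)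
  have husedcard : used.card = n + m := by
    rw [huseddef, Finset.card_image_of_injective _ hf0inj, Finset.card_univ]
    simp
  have hbounds : ∀ x : Fin n ⊕ Fin m, 1 ≤ f0 x ∧ f0 x ≤ m * n + 1 := by
    rintro (i | j)
    · have h1 := fuL_mem a i (by omega)
      rw [hf0u]; omega
    · have h1 := fvL_pos n j
      have h2 := fvL_ub n m j (by omega)
      rw [hf0v]; omega
  have husedsub : used ⊆ Finset.Icc 1 (m * n + 1) := by
    intro x hx
    rw [huseddef, Finset.mem_image] at hx
    obtain ⟨y, _, rfl⟩ := hx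
    exact Finset.mem_Icc.2 (hbounds y)
  set rest := Finset.Icc 1 (m * n + 1) \ used with hrestdef
  have hrestcard : rest.card = t := by
    rw [hrestdef, Finset.card_sdiff_of_subset husedsub, Nat.card_Icc, husedcard]; omega
  set isoE := (Finset.equivFinOfCardEq hrestcard).symm with hisoEdef
  set F : (Fin n ⊕ Fin m) ⊕ Fin t → ℕ :=
    Sum.elim f0 (fun k => (isoE k : ℕ)) with hFdef
  have hFu : ∀ i : Fin n, F (VU n m t i) = fuL a i := fun _ => rfl
  have hFv : ∀ j : Fin m, F (VV n m t j) = fvL n j := fun _ => rfl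
  have hrestmem : ∀ k : Fin t, ((isoE k : ℕ)) ∈ rest := fun k => (isoE k).2
  have hcard : Fintype.card ((Fin n ⊕ Fin m) ⊕ Fin t) = m * n + 1 := by
    simp only [Fintype.card_sum, Fintype.card_fin]; omega
  -- injectivity of the total labeling
  have hFinj : Function.Injective F := by
    rintro (x | k) (x' | k') h
    · exact congrArg Sum.inl (hf0inj h)
    · exfalso
      have h1 := hmemused x
      have h2 : ((isoE k' : ℕ)) ∈ Finset.Icc 1 (m * n + 1) \ used := hrestmem k'
      rw [Finset.mem_sdiff] at h2
      rw [show F (Sum.inl x) = f0 x from rfl,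
        show F (Sum.inr k') = (isoE k' : ℕ) from rfl] at h
      exact h2.2 (h ▸ h1)
    · exfalso
      have h1 := hmemused x'
      have h2 : ((isoE k : ℕ)) ∈ Finset.Icc 1 (m * n + 1) \ used := hrestmem k
      rw [Finset.mem_sdiff] at h2
      rw [show F (Sum.inl x') = f0 x' from rfl,
        show F (Sum.inr k) = (isoE k : ℕ) from rfl] at h
      exact h2.2 (h ▸ h1)
    · have : isoE k = isoE k' := Subtype.ext h
      exact congrArg Sum.inr (isoE.injective this)
  -- range of the total labeling
  have hFrange : Set.range F = Set.Icc 1 (Fintype.card ((Fin n ⊕ Fin m) ⊕ Fin t)) := by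
    rw [hcard]
    ext x
    simp only [Set.mem_range, Set.mem_Icc]
    constructor
    · rintro ⟨(y | k), rfl⟩
      · exact hbounds y
      · have h2 : ((isoE k : ℕ)) ∈ Finset.Icc 1 (m * n + 1) \ used := hrestmem k
        rw [Finset.mem_sdiff, Finset.mem_Icc] at h2
        exact h2.1
    · intro hx
      by_cases hxu : x ∈ used
      · rw [huseddef, Finset.mem_image] at hxu
        obtain ⟨y, _, rfl⟩ := hxu
        exact ⟨Sum.inl y, rfl⟩
      · have hxr : x ∈ rest := by
          rw [hrestdef, Finset.mem_sdiff]; exact ⟨Finset.mem_Icc.2 hx, hxu⟩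
        refine ⟨Sum.inr (isoE.symm ⟨x, hxr⟩), ?_⟩
        show ((isoE (isoE.symm ⟨x, hxr⟩) : ℕ)) = x
        rw [Equiv.apply_symm_apply]
  -- injectivity of edge sums
  set G := unionIsolated (cycleJoin n m) t with hGdef
  have hSinj : Function.Injective (fun e : G.edgeSet => pairSum F e.1) := by
    intro e₁ e₂ hsum
    simp only at hsum
    rcases edge_class n m t e₁ with ⟨i1, j1, hc1, heq1⟩ | ⟨i1, j1, heq1⟩ <;>
      rcases edge_class n m t e₂ with ⟨i2, j2, hc2, heq2⟩ | ⟨i2, j2, heq2⟩ <;>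
      rw [heq1, heq2] at hsum <;>
      simp only [pairSum_mk, hFu, hFv] at hsum
    · -- cycle / cycle
      have hb1 : (i1 : ℕ) < n := i1.isLt
      have hb2 : (j1 : ℕ) < n := j1.isLt
      have hb3 : (i2 : ℕ) < n := i2.isLt
      have hb4 : (j2 : ℕ) < n := j2.isLt
      have hij : (i1 : ℕ) = (i2 : ℕ) ∧ (j1 : ℕ) = (j2 : ℕ) := by
        rcases hc1 with h1 | ⟨h1a, h1b⟩ <;> rcases hc2 with h2 | ⟨h2a, h2b⟩
        · rw [h1, h2, fuL_cycle_sum a i1 (by omega), fuL_cycle_sum a i2 (by omega)] at hsum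
          omega
        · rw [h1, fuL_cycle_sum a i1 (by omega), h2a, h2b,
            show n - 1 = 2 * a by omega, fuL_close_sum a] at hsum
          omega
        · rw [h2, fuL_cycle_sum a i2 (by omega), h1a, h1b,
            show n - 1 = 2 * a by omega, fuL_close_sum a] at hsum
          omega
        · omega
      have h1 : i1 = i2 := Fin.ext hij.1
      have h2 : j1 = j2 := Fin.ext hij.2
      subst h1; subst h2
      exact Subtype.ext (heq1.trans heq2.symm)
    · -- cycle / join : impossible
      exact absurd hsum
        (cycle_ne_join n a i1 j1 i2 j2 hna i1.isLt j1.isLt hc1 (by omega))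
    · -- join / cycle : impossible
      exact absurd hsum.symm
        (cycle_ne_join n a i2 j2 i1 j1 hna i2.isLt j2.isLt hc2 (by omega))
    · -- join / join
      obtain ⟨hi, hj⟩ := join_sum_inj n a i1 i2 j1 j2 hna (by omega) (by omega) hsum
      have h1 : i1 = i2 := Fin.ext hi
      have h2 : j1 = j2 := Fin.ext hj
      subst h1; subst h2
      exact Subtype.ext (heq1.trans heq2.symm)
  -- range of edge sums
  have hSrange : Set.range (fun e : G.edgeSet => pairSum F e.1) =
      Set.Icc (a + 3) (m * n + 3 * a + 3) := by
    ext s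
    simp only [Set.mem_range, Set.mem_Icc]
    constructor
    · rintro ⟨e, rfl⟩
      rcases edge_class n m t e with ⟨i, j, hc, heq⟩ | ⟨i, j, heq⟩ <;>
        rw [heq] <;> simp only [pairSum_mk, hFu, hFv]
      · have hb1 : (i : ℕ) < n := i.isLt
        have hb2 : (j : ℕ) < n := j.isLt
        rcases hc with h1 | ⟨h1a, h1b⟩
        · rw [h1, fuL_cycle_sum a i (by omega)]; omega
        · rw [h1a, h1b, show n - 1 = 2 * a by omega, fuL_close_sum a]; omega
      · have hb1 := fuL_mem a i (by omega)
        rcases Nat.eq_zero_or_pos (j : ℕ) with hj | hj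
        · rw [hj, fvL_zero]; omega
        · have h1 := fvL_lb n j hj
          have h2 := fvL_ub n m j (by omega)
          omega
    · intro hs
      by_cases c1 : s ≤ 3 * a + 3
      · -- join edge with v_0
        obtain ⟨i0, hi0, hfu⟩ := fuL_surj a (s - 1) (by omega) (by omega)
        refine ⟨⟨s(VU n m t ⟨i0, by omega⟩, VV n m t ⟨0, by omega⟩),
          (unionIsolated (cycleJoin n m) t).mem_edgeSet.mpr (adjUV n m t _ _)⟩, ?_⟩
        simp only [pairSum_mk, hFu, hFv]
        rw [hfu, fvL_zero]
        omega
      by_cases c2 : s ≤ 3 * a + 4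
      · -- closing cycle edge
        refine ⟨⟨s(VU n m t ⟨n - 1, by omega⟩, VU n m t ⟨0, by omega⟩),
          (unionIsolated (cycleJoin n m) t).mem_edgeSet.mpr
            (adjUU n m t _ _ (Or.inr ⟨rfl, rfl⟩) (by simp; omega))⟩, ?_⟩
        simp only [pairSum_mk, hFu]
        rw [show n - 1 = 2 * a by omega, fuL_close_sum a]
        omega
      by_cases c3 : s ≤ 5 * a + 4
      · -- ordinary cycle edge
        have hi : s - (3 * a + 5) + 1 ≤ 2 * a := by omega
        refine ⟨⟨s(VU n m t ⟨s - (3 * a + 5), by omega⟩,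
            VU n m t ⟨s - (3 * a + 5) + 1, by omega⟩),
          (unionIsolated (cycleJoin n m) t).mem_edgeSet.mpr
            (adjUU n m t _ _ (Or.inl rfl) (by simp))⟩, ?_⟩
        simp only [pairSum_mk, hFu]
        rw [fuL_cycle_sum a _ hi]
        omega
      · -- join edge with v_j, j ≥ 1
        have hs5 : 5 * a + 5 ≤ s := by omega
        have hdm := Nat.div_add_mod (s - (a + 3)) n
        set k := (s - (a + 3)) / n with hk
        set r := (s - (a + 3)) % n with hr
        have hrn : r < n := Nat.mod_lt _ (by omega)
        have hk2 : 2 ≤ k := by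
          by_contra h
          push_neg at h
          interval_cases k <;> omega
        have hkm : k ≤ m := by
          by_contra h
          push_neg at h
          have h1 : n * (m + 1) ≤ n * k := Nat.mul_le_mul_left n h
          have h2 : n * (m + 1) = n * m + n := by ring
          have h3 : n * m = m * n := by ring
          omega
        have hfvk : fvL n (k - 1) = k * n + 1 := by
          unfold fvL
          rw [if_neg (by omega)]
          congr 2
          omega
        have hck : k * n = n * k := Nat.mul_comm k n
        obtain ⟨i0, hi0, hfu⟩ := fuL_surj a (a + 2 + r) (by omega) (by omega)
        refine ⟨⟨s(VU n m t ⟨i0, by omega⟩, VV n m t ⟨k - 1, by omega⟩),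
          (unionIsolated (cycleJoin n m) t).mem_edgeSet.mpr (adjUV n m t _ _)⟩, ?_⟩
        simp only [pairSum_mk, hFu, hFv]
        rw [hfu, hfvk]
        omega
  exact isSEM_of_sums G F (a + 3) (m * n + 3 * a + 3) (by omega) hFinj hFrange hSinj hSrange

end AuxSEM

/-- for odd `n ≥ 3` and `m ≥ 2`, `C_n + K̄_m ∪ (mn − n − m + 1) K₁` is
super edge-magic, i.e. `μₛ(C_n + K̄_m) ≤ mn − (n+m) + 1`. -/
theorem stmt16 (n m : ℕ) (hn : 3 ≤ n) (hodd : Odd n) (hm : 2 ≤ m) :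
    IsSEM (unionIsolated (cycleJoin n m) (m * n - (n + m) + 1)) ∧
    semDeficiency (cycleJoin n m) ≤ ((m * n - (n + m) + 1 : ℕ) : ℕ∞) := by
  have h1 := stmt16_aux n m hn hodd hm
  exact ⟨h1, sInf_le ⟨m * n - (n + m) + 1, h1, rfl⟩⟩
end

section
/- For every integer m ≥ 1, the join P_2 + K̄_m is super edge-magic with magic constant 3m + 6. -/
open SimpleGraph

namespace Stmt18Aux

variable (m : ℕ)

def fl : Fin 2 ⊕ Fin m → ℕ :=
  Sum.elim (fun i => if i = 0 then 1 else m + 2) (fun j => (j : ℕ) + 2)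

def S : Sym2 (Fin 2 ⊕ Fin m) → ℕ :=
  Sym2.lift ⟨fun a b => fl m a + fl m b, fun a b => by dsimp; omega⟩

@[simp] lemma S_mk (a b : Fin 2 ⊕ Fin m) : S m s(a, b) = fl m a + fl m b := rfl

lemma adj01 : (pathJoin 2 m).Adj (Sum.inl 0) (Sum.inl 1) := by
  rw [pathJoin, SimpleGraph.fromRel_adj]
  exact ⟨by simp, Or.inl (Or.inl ⟨0, 1, rfl, rfl, rfl⟩)⟩

lemma adj_ir (i : Fin 2) (j : Fin m) : (pathJoin 2 m).Adj (Sum.inl i) (Sum.inr j) := by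
  rw [pathJoin, SimpleGraph.fromRel_adj]
  exact ⟨by simp, Or.inl (Or.inr ⟨i, j, rfl, rfl⟩)⟩

lemma edge_cases {e : Sym2 (Fin 2 ⊕ Fin m)} (he : e ∈ (pathJoin 2 m).edgeSet) :
    e = s(Sum.inl 0, Sum.inl 1) ∨ ∃ (i : Fin 2) (j : Fin m), e = s(Sum.inl i, Sum.inr j) := by
  induction e using Sym2.ind with
  | _ a b =>
    rw [SimpleGraph.mem_edgeSet, pathJoin, SimpleGraph.fromRel_adj] at he
    obtain ⟨hne, h | h⟩ := he
    · obtain (⟨i, j, rfl, rfl, hij⟩ | ⟨i, j, rfl, rfl⟩) := h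
      · left
        fin_cases i <;> fin_cases j <;> simp_all
      · exact Or.inr ⟨i, j, rfl⟩
    · obtain (⟨i, j, rfl, rfl, hij⟩ | ⟨i, j, rfl, rfl⟩) := h
      · left
        rw [Sym2.eq_swap]
        fin_cases i <;> fin_cases j <;> simp_all
      · exact Or.inr ⟨i, j, Sym2.eq_swap⟩

@[simp] lemma fl_inl0 : fl m (Sum.inl 0) = 1 := rfl
@[simp] lemma fl_inl1 : fl m (Sum.inl 1) = m + 2 := rfl
@[simp] lemma fl_inr (j : Fin m) : fl m (Sum.inr j) = (j : ℕ) + 2 := rfl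

lemma fl_le (a : Fin 2 ⊕ Fin m) : fl m a ≤ m + 2 := by
  rcases a with i | j
  · fin_cases i <;> simp
  · have := j.isLt
    simp only [fl_inr]
    omega

lemma fl_pos (a : Fin 2 ⊕ Fin m) : 1 ≤ fl m a := by
  rcases a with i | j
  · fin_cases i <;> simp
  · simp only [fl_inr]
    omega

lemma fl_inj (hm : 1 ≤ m) : Function.Injective (fl m) := by
  intro a b hab
  rcases a with i | j <;> rcases b with i' | j'
  · fin_cases i <;> fin_cases i' <;> simp_all <;> omega
  · have := j'.isLt; fin_cases i <;> simp_all <;> omega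
  · have := j.isLt; fin_cases i' <;> simp_all <;> omega
  · have : (j : ℕ) = (j' : ℕ) := by simp_all
    simp [Fin.ext_iff, this]

lemma fl_inl_cases (i : Fin 2) :
    fl m (Sum.inl i) = 1 ∧ i = 0 ∨ fl m (Sum.inl i) = m + 2 ∧ i = 1 := by
  fin_cases i <;> simp [fl]

lemma S_bounds {e : Sym2 (Fin 2 ⊕ Fin m)} (he : e ∈ (pathJoin 2 m).edgeSet) :
    3 ≤ S m e ∧ S m e ≤ 2 * m + 3 := by
  rcases edge_cases m he with rfl | ⟨i, j, rfl⟩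
  · simp only [S_mk, fl_inl0, fl_inl1]
    omega
  · have := j.isLt
    rcases fl_inl_cases m i with ⟨h, _⟩ | ⟨h, _⟩ <;>
      · simp only [S_mk, fl_inr, h]
        omega

lemma S_inj {e₁ e₂ : Sym2 (Fin 2 ⊕ Fin m)} (h₁ : e₁ ∈ (pathJoin 2 m).edgeSet)
    (h₂ : e₂ ∈ (pathJoin 2 m).edgeSet) (hS : S m e₁ = S m e₂) : e₁ = e₂ := by
  rcases edge_cases m h₁ with rfl | ⟨i, j, rfl⟩ <;>
    rcases edge_cases m h₂ with rfl | ⟨i', j', rfl⟩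
  · rfl
  · exfalso
    have := j'.isLt
    simp only [S_mk, fl_inl0, fl_inl1, fl_inr] at hS
    rcases fl_inl_cases m i' with ⟨h, _⟩ | ⟨h, _⟩ <;> omega
  · exfalso
    have := j.isLt
    simp only [S_mk, fl_inl0, fl_inl1, fl_inr] at hS
    rcases fl_inl_cases m i with ⟨h, _⟩ | ⟨h, _⟩ <;> omega
  · simp only [S_mk, fl_inr] at hS
    have hj := j.isLt
    have hj' := j'.isLt
    rcases fl_inl_cases m i with ⟨h, rfl⟩ | ⟨h, rfl⟩ <;>
        rcases fl_inl_cases m i' with ⟨h', rfl⟩ | ⟨h', rfl⟩ <;>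
      first
      | (exfalso; omega)
      | (have : j = j' := Fin.ext (by omega); rw [this])

lemma S_surj (hm : 1 ≤ m) {s : ℕ} (h3 : 3 ≤ s) (h : s ≤ 2 * m + 3) :
    ∃ e ∈ (pathJoin 2 m).edgeSet, S m e = s := by
  rcases Nat.lt_or_ge s (m + 3) with hlt | hge
  · exact ⟨s(Sum.inl 0, Sum.inr ⟨s - 3, by omega⟩), (pathJoin 2 m).mem_edgeSet.mpr (adj_ir m 0 _),
      by simp; omega⟩
  rcases Nat.eq_or_lt_of_le hge with heq | hgt
  · exact ⟨s(Sum.inl 0, Sum.inl 1), (pathJoin 2 m).mem_edgeSet.mpr (adj01 m), by simp; omega⟩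
  · exact ⟨s(Sum.inl 1, Sum.inr ⟨s - m - 4, by omega⟩),
      (pathJoin 2 m).mem_edgeSet.mpr (adj_ir m 1 _), by simp; omega⟩

end Stmt18Aux

open Stmt18Aux in

/-- for every `m ≥ 1`, `P₂ + K̄_m` is super edge-magic with magic
constant `3m + 6`. -/
theorem stmt18 (m : ℕ) (hm : 1 ≤ m) : IsSEMWith (pathJoin 2 m) (3 * m + 6) := by
  set G := pathJoin 2 m with hG
  refine ⟨fl m, fun e => 3 * m + 6 - S m e.val, ?_, ?_, ?_, ?_⟩
  case _ =>
    have ginj : ∀ e₁ e₂ : G.edgeSet, 3 * m + 6 - S m e₁.val = 3 * m + 6 - S m e₂.val → e₁ = e₂ := by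
      intro e₁ e₂ h
      have b₁ := S_bounds m e₁.prop
      have b₂ := S_bounds m e₂.prop
      exact Subtype.ext (S_inj m e₁.prop e₂.prop (by omega))
    intro x y hxy
    rcases x with a | e <;> rcases y with b | e'
    · exact congrArg Sum.inl (fl_inj m hm hxy)
    · exfalso
      have := fl_le m a
      have := S_bounds m e'.prop
      simp only [Sum.elim_inl, Sum.elim_inr] at hxy
      omega
    · exfalso
      have := fl_le m b
      have := S_bounds m e.prop
      simp only [Sum.elim_inl, Sum.elim_inr] at hxy
      omega
    · exact congrArg Sum.inr (ginj e e' hxy)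
  case _ =>
    have hcard : Fintype.card (Fin 2 ⊕ Fin m) = m + 2 := by simp [Fintype.card_sum]; omega
    have hrg : Set.range (fun e : G.edgeSet => 3 * m + 6 - S m e.val)
        = Set.Icc (m + 3) (3 * m + 3) := by
      ext v
      simp only [Set.mem_range, Set.mem_Icc]
      constructor
      · rintro ⟨e, rfl⟩
        have := S_bounds m e.prop
        omega
      · rintro ⟨h1, h2⟩
        obtain ⟨e, he, hSe⟩ := S_surj m hm (s := 3 * m + 6 - v) (by omega) (by omega)
        refine ⟨⟨e, he⟩, ?_⟩
        show 3 * m + 6 - S m e = v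
        omega
    have hq : G.edgeSet.ncard = 2 * m + 1 := by
      have h1 : Nat.card (Set.range (fun e : G.edgeSet => 3 * m + 6 - S m e.val))
          = Nat.card G.edgeSet := by
        apply Nat.card_range_of_injective
        intro e₁ e₂ h
        have h' : 3 * m + 6 - S m e₁.val = 3 * m + 6 - S m e₂.val := h
        clear h
        have b₁ := S_bounds m e₁.prop
        have b₂ := S_bounds m e₂.prop
        exact Subtype.ext (S_inj m e₁.prop e₂.prop (by omega))
      rw [hrg] at h1
      rw [← Nat.card_coe_set_eq, ← h1,
        Nat.card_coe_set_eq, ← Finset.coe_Icc, Set.ncard_coe_finset, Nat.card_Icc]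
      omega
    rw [Set.Sum.elim_range, hrg, hcard, hq]
    ext v
    simp only [Set.mem_union, Set.mem_Icc, Set.mem_range]
    constructor
    · rintro (⟨a, rfl⟩ | h)
      · have := fl_le m a
        have := fl_pos m a
        omega
      · omega
    · intro ⟨h1, h2⟩
      rcases Nat.lt_or_ge v (m + 3) with hlt | hge
      · left
        rcases Nat.lt_or_ge v 2 with hv | hv
        · exact ⟨Sum.inl 0, by simp; omega⟩
        rcases Nat.lt_or_ge v (m + 2) with hv2 | hv2
        · exact ⟨Sum.inr ⟨v - 2, by omega⟩, by simp; omega⟩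
        · exact ⟨Sum.inl 1, by simp; omega⟩
      · right
        omega
  case _ =>
    have hcard : Fintype.card (Fin 2 ⊕ Fin m) = m + 2 := by simp [Fintype.card_sum]; omega
    rw [hcard]
    ext v
    simp only [Set.mem_range, Set.mem_Icc]
    constructor
    · rintro ⟨a, rfl⟩
      have := fl_le m a
      have := fl_pos m a
      omega
    · intro ⟨h1, h2⟩
      rcases Nat.lt_or_ge v 2 with hv | hv
      · exact ⟨Sum.inl 0, by simp; omega⟩
      rcases Nat.lt_or_ge v (m + 2) with hv2 | hv2
      · exact ⟨Sum.inr ⟨v - 2, by omega⟩, by simp; omega⟩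
      · exact ⟨Sum.inl 1, by simp; omega⟩
  case _ =>
    intro x y h
    have hb := S_bounds m (G.mem_edgeSet.mpr h)
    have hrfl : S m s(x, y) = fl m x + fl m y := rfl
    show fl m x + (3 * m + 6 - S m s(x, y)) + fl m y = 3 * m + 6
    omega
end

section
/- For every integer n ≥ 2, the join K_{1,n} + K̄_1 is super edge-magic with magic constant 3n + 6. -/
open SimpleGraph

lemma starJoin_edge_iff (n : ℕ) (e : Sym2 (Fin (n+1) ⊕ Fin 1)) :
    e ∈ (starJoin n 1).edgeSet ↔
      (∃ i : Fin (n+1), i ≠ 0 ∧ e = s(Sum.inl 0, Sum.inl i)) ∨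
      (∃ i : Fin (n+1), e = s(Sum.inl i, Sum.inr 0)) := by
  induction e using Sym2.ind with
  | _ a b =>
    simp only [SimpleGraph.mem_edgeSet, starJoin, SimpleGraph.fromRel_adj]
    constructor
    · rintro ⟨hab, h | h⟩
      · rcases h with ⟨i, rfl, rfl, hi⟩ | ⟨i, j, rfl, rfl⟩
        · exact Or.inl ⟨i, hi, rfl⟩
        · exact Or.inr ⟨i, by rw [Subsingleton.elim j 0]⟩
      · rcases h with ⟨i, rfl, rfl, hi⟩ | ⟨i, j, rfl, rfl⟩
        · exact Or.inl ⟨i, hi, Sym2.eq_swap⟩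
        · exact Or.inr ⟨i, by rw [Subsingleton.elim j 0]; exact Sym2.eq_swap⟩
    · rintro (⟨i, hi, he⟩ | ⟨i, he⟩)
      · rw [Sym2.eq_iff] at he
        rcases he with ⟨rfl, rfl⟩ | ⟨rfl, rfl⟩
        · exact ⟨by simpa using fun h => hi h.symm, Or.inl (Or.inl ⟨i, rfl, rfl, hi⟩)⟩
        · exact ⟨by simpa using hi, Or.inr (Or.inl ⟨i, rfl, rfl, hi⟩)⟩
      · rw [Sym2.eq_iff] at he
        rcases he with ⟨rfl, rfl⟩ | ⟨rfl, rfl⟩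
        · exact ⟨by simp, Or.inl (Or.inr ⟨i, 0, rfl, rfl⟩)⟩
        · exact ⟨by simp, Or.inr (Or.inr ⟨i, 0, rfl, rfl⟩)⟩

/-- parametrization of the edge set -/
def edgeParam (n : ℕ) : Fin n ⊕ Fin (n+1) → Sym2 (Fin (n+1) ⊕ Fin 1) :=
  Sum.elim (fun j => s(Sum.inl 0, Sum.inl (j.succ : Fin (n+1))))
           (fun i => s(Sum.inl i, Sum.inr 0))

lemma edgeParam_inj (n : ℕ) : Function.Injective (edgeParam n) := by
  rintro (a | a) (b | b) h <;>
    simp only [edgeParam, Sum.elim_inl, Sum.elim_inr, Sym2.eq_iff] at h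
  · rcases h with ⟨-, h⟩ | ⟨-, h⟩
    · exact congrArg Sum.inl (Fin.succ_injective _ (by simpa using h))
    · exact absurd (by simpa using h) (Fin.succ_ne_zero a)
  · exfalso; rcases h with ⟨h1, h2⟩ | ⟨h1, h2⟩ <;> simp_all
  · exfalso; rcases h with ⟨h1, h2⟩ | ⟨h1, h2⟩ <;> simp_all
  · rcases h with ⟨h, -⟩ | ⟨h1, h2⟩
    · exact congrArg Sum.inr (by simpa using h)
    · exact absurd h1 (by simp)

lemma edgeSet_eq (n : ℕ) : (starJoin n 1).edgeSet = Set.range (edgeParam n) := by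
  ext e
  rw [starJoin_edge_iff]
  constructor
  · rintro (⟨i, hi, rfl⟩ | ⟨i, rfl⟩)
    · refine ⟨Sum.inl (i.pred hi), ?_⟩
      simp [edgeParam]
    · exact ⟨Sum.inr i, rfl⟩
  · rintro ⟨a | a, rfl⟩
    · exact Or.inl ⟨a.succ, Fin.succ_ne_zero a, rfl⟩
    · exact Or.inr ⟨a, rfl⟩

lemma edge_ncard (n : ℕ) : (starJoin n 1).edgeSet.ncard = 2*n+1 := by
  rw [edgeSet_eq, Set.ncard_eq_toFinset_card', Set.toFinset_range,
    Finset.card_image_of_injective _ (edgeParam_inj n)]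
  simp; omega

/-- for every `n ≥ 2`, `K_{1,n} + K̄₁` is super edge-magic with magic
constant `3n + 6`. -/
theorem stmt19 (n : ℕ) (hn : 2 ≤ n) : IsSEMWith (starJoin n 1) (3 * n + 6) := by
  classical
  set f : Fin (n+1) ⊕ Fin 1 → ℕ := Sum.elim (fun i => (i:ℕ)+1) (fun _ => n+2) with hf
  have hsum : ∀ a b : Fin (n+1) ⊕ Fin 1, f a + f b = f b + f a := fun a b => by ring
  set es : Sym2 (Fin (n+1) ⊕ Fin 1) → ℕ := Sym2.lift ⟨fun a b => f a + f b, hsum⟩ with hes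
  set g : (starJoin n 1).edgeSet → ℕ := fun e => 3*n+6 - es e.1 with hg
  have hfle : ∀ v, 1 ≤ f v ∧ f v ≤ n+2 := by
    rintro (i | j) <;> simp [hf]
  have hes_mk : ∀ a b, es s(a,b) = f a + f b := fun a b => rfl
  -- value of es on edges
  have hval : ∀ e : (starJoin n 1).edgeSet, 3 ≤ es e.1 ∧ es e.1 ≤ 2*n+3 := by
    rintro ⟨e, he⟩
    rw [starJoin_edge_iff] at he
    rcases he with ⟨i, hi, rfl⟩ | ⟨i, rfl⟩ <;> simp only [hes_mk, hf, Sum.elim_inl, Sum.elim_inr]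
    · have : 1 ≤ (i:ℕ) := Fin.pos_iff_ne_zero.mpr hi
      simp only [Fin.val_zero]
      have := i.isLt; omega
    · have := i.isLt; omega
  -- injectivity of es on edges
  have hes_inj : ∀ e₁ e₂ : (starJoin n 1).edgeSet, es e₁.1 = es e₂.1 → e₁ = e₂ := by
    rintro ⟨e₁, h₁⟩ ⟨e₂, h₂⟩ h
    rw [starJoin_edge_iff] at h₁ h₂
    apply Subtype.ext
    rcases h₁ with ⟨i, hi, rfl⟩ | ⟨i, rfl⟩ <;> rcases h₂ with ⟨j, hj, rfl⟩ | ⟨j, rfl⟩ <;>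
      simp only [hes_mk, hf, Sum.elim_inl, Sum.elim_inr, Fin.val_zero] at h
    · have : i = j := Fin.ext (by omega)
      subst this; rfl
    · have hi1 : 1 ≤ (i:ℕ) := Fin.pos_iff_ne_zero.mpr hi
      have := i.isLt; have := j.isLt; omega
    · have hj1 : 1 ≤ (j:ℕ) := Fin.pos_iff_ne_zero.mpr hj
      have := i.isLt; have := j.isLt; omega
    · have : i = j := Fin.ext (by omega)
      subst this; rfl
  have hginj : Function.Injective g := by
    intro e₁ e₂ h
    apply hes_inj
    have h1 := hval e₁; have h2 := hval e₂
    simp only [hg] at h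
    omega
  have hfinj : Function.Injective f := by
    rintro (i | i) (j | j) h <;> simp only [hf, Sum.elim_inl, Sum.elim_inr] at h
    · exact congrArg Sum.inl (Fin.ext (by omega))
    · have := i.isLt; omega
    · have := j.isLt; omega
    · rw [Subsingleton.elim i j]
  have hcard : Fintype.card (Fin (n+1) ⊕ Fin 1) = n + 2 := by simp
  refine ⟨f, g, ?_, ?_, ?_, ?_⟩
  · rintro (a | a) (b | b) h <;> simp only [Sum.elim_inl, Sum.elim_inr] at h
    · exact congrArg Sum.inl (hfinj h)
    · have := (hfle a).2; have h2 := (hval b).2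
      simp only [hg] at h; omega
    · have := (hfle b).2; have h2 := (hval a).2
      simp only [hg] at h; omega
    · exact congrArg Sum.inr (hginj h)
  · rw [hcard, edge_ncard]
    ext m
    simp only [Set.mem_range, Set.mem_Icc]
    constructor
    · rintro ⟨a | a, rfl⟩
      · have h1 := (hfle a).1; have h2 := (hfle a).2
        simp only [Sum.elim_inl]; omega
      · have h1 := (hval a).1; have h2 := (hval a).2
        simp only [Sum.elim_inr, hg]; omega
    · rintro ⟨h1, h2⟩
      by_cases hm : m ≤ n + 2
      · -- vertex label
        by_cases hm' : m ≤ n + 1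
        · refine ⟨Sum.inl (Sum.inl ⟨m - 1, by omega⟩), ?_⟩
          simp [hf]; omega
        · refine ⟨Sum.inl (Sum.inr 0), ?_⟩
          simp [hf]; omega
      · -- edge label, m ∈ [n+3, 3n+3]
        by_cases hm' : m ≤ 2*n + 3
        · -- join edge i = m - n - 3
          refine ⟨Sum.inr ⟨s(Sum.inl ⟨2*n + 3 - m, by omega⟩, Sum.inr 0),
            (starJoin_edge_iff n _).mpr (Or.inr ⟨_, rfl⟩)⟩, ?_⟩
          simp only [Sum.elim_inr, hg, hes_mk, hf, Sum.elim_inl, Fin.val_mk]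
          omega
        · -- star edge i = 3n + 4 - m ∈ [1, n]
          refine ⟨Sum.inr ⟨s(Sum.inl 0, Sum.inl ⟨3*n + 4 - m, by omega⟩),
            (starJoin_edge_iff n _).mpr (Or.inl ⟨_, ?_, rfl⟩)⟩, ?_⟩
          · intro hcon
            rw [Fin.ext_iff] at hcon
            simp only [Fin.val_mk, Fin.val_zero] at hcon
            omega
          · simp only [Sum.elim_inr, hg, hes_mk, hf, Sum.elim_inl, Fin.val_zero,
              Fin.val_mk]
            omega
  · rw [hcard]
    ext m
    simp only [Set.mem_range, Set.mem_Icc]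
    constructor
    · rintro ⟨a, rfl⟩
      exact ⟨(hfle a).1, (hfle a).2⟩
    · rintro ⟨h1, h2⟩
      by_cases hm' : m ≤ n + 1
      · refine ⟨Sum.inl ⟨m - 1, by omega⟩, ?_⟩
        simp [hf]; omega
      · exact ⟨Sum.inr 0, by simp [hf]; omega⟩
  · intro x y h
    have h1 := (hfle x).2; have h2 := (hfle y).2
    simp only [hg, hes_mk]
    omega
end
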